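/- arXiv:0710.0173 — 3 statements merged into one kernel-verified Lean document; each statement's English description precedes it below -/
import Mathlib

section
/- For any E-GCM graph (Γ,M) (not necessarily connected) and any position λ, if some game sequence from λ diverges (is infinite), then every game sequence from λ diverges. -/
/-- An E-generalized Cartan matrix (E-GCM) on a finite index type `ι`. -/
structure EGCM (ι : Type*) [Fintype ι] where
  /-- the matrix of amplitudes -/
  M : ι → ι → ℝ
  diag : ∀ i, M i i = 2
  offDiag_nonpos : ∀ i j, i ≠ j → M i j ≤ 0
  zero_iff : ∀ i j, M i j = 0 ↔ M j i = 0
  prod_cond : ∀ i j, i ≠ j → M i j * M j i ≠ 0 →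
    4 ≤ M i j * M j i ∨
      ∃ k : ℕ, 3 ≤ k ∧ M i j * M j i = 4 * Real.cos (Real.pi / k) ^ 2

namespace EGCM

variable {ι : Type*} [Fintype ι]

/-- Adjacency in the E-GCM graph. -/
def Adj (E : EGCM ι) (i j : ι) : Prop := i ≠ j ∧ E.M i j ≠ 0

/-- The underlying simple graph of an E-GCM graph. -/
def graph (E : EGCM ι) : SimpleGraph ι where
  Adj i j := i ≠ j ∧ E.M i j ≠ 0
  symm := by
    constructor
    intro i j ⟨h1, h2⟩
    exact ⟨h1.symm, fun hz => h2 ((E.zero_iff j i).mp hz)⟩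
  loopless := by constructor; intro i ⟨h, _⟩; exact h rfl

/-- The result of firing node `i` from position `lam`. -/
def fire (E : EGCM ι) (lam : ι → ℝ) (i : ι) : ι → ℝ := fun j => lam j - E.M i j * lam i

/-- The position resulting from firing the nodes in the list `s` in order. -/
def fireList (E : EGCM ι) (lam : ι → ℝ) : List ι → (ι → ℝ)
  | [] => lam
  | i :: s => fireList E (E.fire lam i) s

/-- The firing sequence `s` is legal from position `lam`: at each step the
fired node carries a positive number. -/
def Legal (E : EGCM ι) (lam : ι → ℝ) : List ι → Prop
  | [] => True
  | i :: s => 0 < lam i ∧ Legal E (E.fire lam i) s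

/-- A position with no positive entries. -/
def Terminal (lam : ι → ℝ) : Prop := ∀ i, lam i ≤ 0

/-- `s` is a (convergent) game sequence from `lam`: a legal firing sequence whose
resulting position has no positive entries. -/
def IsGameSeq (E : EGCM ι) (lam : ι → ℝ) (s : List ι) : Prop :=
  E.Legal lam s ∧ Terminal (E.fireList lam s)

/-- The position after `k` steps of the infinite firing sequence `f`. -/
def posAt (E : EGCM ι) (lam : ι → ℝ) (f : ℕ → ι) : ℕ → (ι → ℝ)
  | 0 => lam
  | k + 1 => E.fire (posAt E lam f k) (f k)

/-- `f` is a divergent game sequence from `lam`: an infinite sequence of legal firings. -/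
def DivergentSeq (E : EGCM ι) (lam : ι → ℝ) (f : ℕ → ι) : Prop :=
  ∀ k, 0 < E.posAt lam f k (f k)

/-- A dominant position: all numbers nonnegative. -/
def Dominant (lam : ι → ℝ) : Prop := ∀ i, 0 ≤ lam i

/-- A strongly dominant position: all numbers positive. -/
def StronglyDominant (lam : ι → ℝ) : Prop := ∀ i, 0 < lam i

/-- The E-GCM graph is admissible if some nonzero dominant position has a
convergent game sequence. -/
def Admissible (E : EGCM ι) : Prop :=
  ∃ lam : ι → ℝ, Dominant lam ∧ lam ≠ 0 ∧ ∃ s : List ι, E.IsGameSeq lam s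

/-- The E-GCM graph is strongly admissible if every nonzero dominant position has a
convergent game sequence. -/
def StronglyAdmissible (E : EGCM ι) : Prop :=
  ∀ lam : ι → ℝ, Dominant lam → lam ≠ 0 → ∃ s : List ι, E.IsGameSeq lam s

/-- A position is adjacency-free if no position reachable from it by a legal firing
sequence (i.e. no intermediate position of a game sequence) has positive numbers at
two adjacent nodes. -/
def AdjacencyFree (E : EGCM ι) (lam : ι → ℝ) : Prop :=
  ∀ s : List ι, E.Legal lam s →
    ¬ ∃ i j, E.Adj i j ∧ 0 < E.fireList lam s i ∧ 0 < E.fireList lam s j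

/-- A `J`-complement-dominant position: zero exactly at the nodes of `J`, positive elsewhere. -/
def JcDominant (J : Set ι) (lam : ι → ℝ) : Prop :=
  (∀ j ∈ J, lam j = 0) ∧ ∀ i ∉ J, 0 < lam i

open Classical in
/-- The Coxeter exponent `m i j` attached to the E-GCM: `m i j = k` if
`M i j * M j i = 4 cos²(π/k)` with `k ≥ 2`, and `m i j = 0` (representing `∞`)
if `M i j * M j i ≥ 4`. -/
noncomputable def m (E : EGCM ι) (i j : ι) : ℕ :=
  if i = j then 1
  else if h : ∃ k : ℕ, 2 ≤ k ∧ E.M i j * E.M j i = 4 * Real.cos (Real.pi / k) ^ 2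
    then Nat.find h else 0

theorem m_symm (E : EGCM ι) (i j : ι) : E.m i j = E.m j i := by
  unfold m
  rcases eq_or_ne i j with rfl | hij
  · simp
  · rw [if_neg hij, if_neg (Ne.symm hij)]
    by_cases h : ∃ k : ℕ, 2 ≤ k ∧ E.M i j * E.M j i = 4 * Real.cos (Real.pi / k) ^ 2
    · have h' : ∃ k : ℕ, 2 ≤ k ∧ E.M j i * E.M i j = 4 * Real.cos (Real.pi / k) ^ 2 := by
        rw [mul_comm]; exact h
      rw [dif_pos h, dif_pos h']
      exact le_antisymm (Nat.find_mono fun n hn => by rwa [mul_comm (E.M i j)])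
        (Nat.find_mono fun n hn => by rwa [mul_comm (E.M j i)])
    · have h' : ¬ ∃ k : ℕ, 2 ≤ k ∧ E.M j i * E.M i j = 4 * Real.cos (Real.pi / k) ^ 2 := by
        rw [mul_comm]; exact h
      rw [dif_neg h, dif_neg h']

theorem m_offDiag (E : EGCM ι) (i j : ι) (h : i ≠ j) : E.m i j ≠ 1 := by
  classical
  unfold m
  rw [if_neg h]
  split
  · rename_i hex
    have := Nat.find_spec hex
    omega
  · omega

/-- The Coxeter matrix associated to the E-GCM. -/
noncomputable def cox (E : EGCM ι) : CoxeterMatrix ι where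
  M := fun i j => E.m i j
  isSymm := by
    ext i j
    exact E.m_symm j i
  diagonal := by intro i; simp [m]
  off_diagonal := fun i j h => E.m_offDiag i j h

/-- The reflection `S i` of the geometric representation:
`S i v = v − 2 B(α i, v) • α i` where `B (α i, α j) = M i j / 2`. -/
noncomputable def S [DecidableEq ι] (E : EGCM ι) (i : ι) : Module.End ℝ (ι → ℝ) :=
  LinearMap.id -
    LinearMap.smulRight
      ((∑ k, E.M i k • LinearMap.proj k : (ι → ℝ) →ₗ[ℝ] ℝ)) (Pi.single i 1)

end EGCM

section Roots

variable {ι : Type*} [Fintype ι] [DecidableEq ι]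
variable {W : Type*} [Group W]

/-- `α` is a root for the geometric representation `σ`. -/
def IsRoot (σ : W →* Module.End ℝ (ι → ℝ)) (α : ι → ℝ) : Prop :=
  ∃ (w : W) (i : ι), σ w (Pi.single i 1) = α

/-- `α` is a positive root. -/
def IsPosRoot (σ : W →* Module.End ℝ (ι → ℝ)) (α : ι → ℝ) : Prop :=
  IsRoot σ α ∧ ∀ i, 0 ≤ α i

/-- `α` is a negative root. -/
def IsNegRoot (σ : W →* Module.End ℝ (ι → ℝ)) (α : ι → ℝ) : Prop :=
  IsRoot σ α ∧ ∀ i, α i ≤ 0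

/-- `N_M(w)`: the set of positive roots sent to negative roots by `w`. -/
def NM (σ : W →* Module.End ℝ (ι → ℝ)) (w : W) : Set (ι → ℝ) :=
  {α | IsPosRoot σ α ∧ IsNegRoot σ (σ w α)}

/-- `𝔖_M(α)`: the positive roots which are real multiples of `α`. -/
def Sfrak (σ : W →* Module.End ℝ (ι → ℝ)) (α : ι → ℝ) : Set (ι → ℝ) :=
  {β | (∃ K : ℝ, β = K • α) ∧ IsPosRoot σ β}

end Roots

section Parabolic

variable {ι : Type*} {W : Type*} [Group W]

/-- The standard parabolic subgroup `W_J`. -/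
def parabolic {M : CoxeterMatrix ι} (cs : CoxeterSystem M W) (J : Set ι) : Subgroup W :=
  Subgroup.closure (cs.simple '' J)

/-- The set `W^J` of minimal coset representatives. -/
def minReps {M : CoxeterMatrix ι} (cs : CoxeterSystem M W) (J : Set ι) : Set W :=
  {w | ∀ j ∈ J, cs.length w < cs.length (w * cs.simple j)}

end Parabolic

namespace EGCM

variable {ι : Type*} [Fintype ι]

/-- The E-GCM subgraph induced on a subset `I` of the nodes. -/
def restrict (E : EGCM ι) (I : Finset ι) : EGCM {x // x ∈ I} where
  M i j := E.M i j
  diag i := E.diag i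
  offDiag_nonpos i j h := E.offDiag_nonpos i j (fun hc => h (Subtype.ext hc))
  zero_iff i j := E.zero_iff i j
  prod_cond i j h := E.prod_cond i j (fun hc => h (Subtype.ext hc))

/-- Adjacent nodes `i`, `j` are odd-neighborly if `m i j` is odd. -/
def OddNeighborly (E : EGCM ι) (i j : ι) : Prop := E.Adj i j ∧ Odd (E.m i j)

/-- The factor `K_{j i} = −(M j i) / (2 cos (π / m i j))` attached to an
odd-neighborly pair `(i, j)`. -/
noncomputable def Kfac (E : EGCM ι) (i j : ι) : ℝ :=
  -E.M j i / (2 * Real.cos (Real.pi / (E.m i j : ℝ)))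

/-- `Π_P` for the ON-path `P` given by a list of nodes: the product of the factors
`K` along consecutive pairs. -/
noncomputable def piON (E : EGCM ι) : List ι → ℝ
  | [] => 1
  | [_] => 1
  | a :: b :: t => piON E (b :: t) * E.Kfac a b

/-- `y` can be reached from `x` by a path of odd neighbors. -/
def ONReach (E : EGCM ι) (x y : ι) : Prop :=
  ∃ l : List ι, l.Chain' E.OddNeighborly ∧ l.head? = some x ∧ l.getLast? = some y

/-- The ON-connected component containing `x` is unital ON-cyclic: every ON-cycle
whose nodes lie in this component has `Π = 1`. -/
def UnitalONCyclicAt (E : EGCM ι) (x : ι) : Prop :=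
  ∀ l : List ι, l ≠ [] → l.Chain' E.OddNeighborly → (∀ y ∈ l, E.ONReach x y) →
    l.head? = l.getLast? → E.piON l = 1

/-- The E-GCM graph has an odd asymmetry: an odd-neighborly pair `i`, `j` with
`M i j ≠ M j i`. -/
def HasOddAsymmetry (E : EGCM ι) : Prop :=
  ∃ i j, E.OddNeighborly i j ∧ E.M i j ≠ E.M j i

end EGCM

section FullComm

variable {ι : Type*} [Fintype ι] {W : Type*} [Group W]

/-- An elementary simplification of commuting type: interchange adjacent letters
`x`, `y` with `m x y = 2`. -/
def CommMove (E : EGCM ι) (l l' : List ι) : Prop :=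
  ∃ (u v : List ι) (x y : ι), E.m x y = 2 ∧ l = u ++ x :: y :: v ∧ l' = u ++ y :: x :: v

/-- `w` is fully commutative: any reduced word for `w` can be obtained from any other
by a sequence of elementary simplifications of commuting type. -/
def FullyCommutative (E : EGCM ι) {W : Type*} [Group W] (cs : CoxeterSystem E.cox W)
    (w : W) : Prop :=
  ∀ l l' : List ι,
    cs.IsReduced l.reverse → cs.wordProd l.reverse = w →
    cs.IsReduced l'.reverse → cs.wordProd l'.reverse = w →
    Relation.ReflTransGen (CommMove E) l l'

end FullComm

/-- The Coxeter graph of a Coxeter matrix: an edge between `i ≠ j` iff `m i j ≠ 2`. -/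
def coxGraph {ι : Type*} (cm : CoxeterMatrix ι) : SimpleGraph ι where
  Adj i j := i ≠ j ∧ cm i j ≠ 2
  symm := by
    constructor
    intro i j ⟨h1, h2⟩
    exact ⟨h1.symm, by rwa [cm.symmetric j i]⟩
  loopless := by constructor; intro i ⟨h, _⟩; exact h rfl

/-- The E-GCM `E` has associated exponents given by the Coxeter matrix `cm`:
`M i j * M j i = 4 cos² (π / cm i j)` when `cm i j ≠ 0` and `M i j * M j i ≥ 4`
when `cm i j = 0` (representing `∞`), with `M i j = 0` iff `cm i j = 2`. -/
def Compat {ι : Type*} [Fintype ι] (E : EGCM ι) (cm : CoxeterMatrix ι) : Prop :=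
  ∀ i j : ι, i ≠ j →
    (E.M i j = 0 ↔ cm i j = 2) ∧
    ((cm i j = 0 ∧ 4 ≤ E.M i j * E.M j i) ∨
      (cm i j ≠ 0 ∧ E.M i j * E.M j i = 4 * Real.cos (Real.pi / (cm i j : ℝ)) ^ 2))

namespace NGAux

def cheb (c : ℝ) : ℕ → ℝ
  | 0 => 0
  | 1 => 1
  | n+2 => c * cheb c (n+1) - cheb c n

lemma cheb_two (c : ℝ) (n : ℕ) : cheb c (n+2) = c * cheb c (n+1) - cheb c n := rfl

lemma cheb_sin (θ : ℝ) (hs : Real.sin θ ≠ 0) : ∀ t,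
    cheb (2*Real.cos θ) t = Real.sin (t*θ)/Real.sin θ := by
  have key : ∀ t, cheb (2*Real.cos θ) t = Real.sin (t*θ)/Real.sin θ ∧
      cheb (2*Real.cos θ) (t+1) = Real.sin ((t+1)*θ)/Real.sin θ := by
    intro t
    induction t with
    | zero => simp [cheb, div_self hs]
    | succ t ih =>
      refine ⟨by push_cast; exact_mod_cast ih.2, ?_⟩
      rw [cheb_two, ih.1, ih.2]
      have h1 : ((t:ℝ)+1+1)*θ = ((t:ℝ)+1)*θ + θ := by ring
      have h2 : ((t:ℝ))*θ = ((t:ℝ)+1)*θ - θ := by ring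
      push_cast
      rw [h1, h2, Real.sin_add, Real.sin_sub]
      field_simp
      ring
  exact fun t => (key t).1

lemma cheb_ge (c : ℝ) (hc : 2 ≤ c) : ∀ t,
    0 ≤ cheb c t ∧ cheb c t ≤ cheb c (t+1) ∧ 1 ≤ cheb c (t+1) := by
  intro t
  induction t with
  | zero => norm_num [cheb]
  | succ t ih =>
    obtain ⟨h0, h1, h2⟩ := ih
    have key : cheb c (t+1) ≤ cheb c (t+2) := by
      rw [cheb_two]
      nlinarith
    exact ⟨by linarith, key, by linarith⟩

lemma cheb_m (m : ℕ) (hm : 3 ≤ m) :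
    (∀ t, 1 ≤ t → t ≤ m - 1 → 0 < cheb (2*Real.cos (Real.pi/m)) t) ∧
    (∀ t, t ≤ m → 0 ≤ cheb (2*Real.cos (Real.pi/m)) t) ∧
    cheb (2*Real.cos (Real.pi/m)) m = 0 := by
  have hm0 : (0:ℝ) < m := by positivity
  have hθpos : 0 < Real.pi / m := by positivity
  have hm3 : (3:ℝ) ≤ m := by exact_mod_cast hm
  have hθle : Real.pi / m < Real.pi := by
    rw [div_lt_iff₀ hm0]
    nlinarith [Real.pi_pos]
  have hsin : 0 < Real.sin (Real.pi/m) :=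
    Real.sin_pos_of_pos_of_lt_pi hθpos hθle
  have hs := cheb_sin (Real.pi/m) (ne_of_gt hsin)
  refine ⟨fun t h1 h2 => ?_, fun t h2 => ?_, ?_⟩
  · rw [hs]
    apply div_pos _ hsin
    apply Real.sin_pos_of_pos_of_lt_pi
    · positivity
    · have ht : (t:ℝ) < m := by exact_mod_cast (by omega : t < m)
      calc (t:ℝ) * (Real.pi/m) = (t:ℝ) * Real.pi / m := by ring
      _ < Real.pi := by
        rw [div_lt_iff₀ hm0]
        nlinarith [Real.pi_pos]
  · rw [hs]
    apply div_nonneg _ (le_of_lt hsin)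
    apply Real.sin_nonneg_of_nonneg_of_le_pi
    · positivity
    · have : (t:ℝ) ≤ m := by exact_mod_cast h2
      calc (t:ℝ) * (Real.pi/m) ≤ (m:ℝ) * (Real.pi/m) := by
            apply mul_le_mul_of_nonneg_right this (le_of_lt hθpos)
      _ = Real.pi := by field_simp
  · rw [hs]
    have : (m:ℝ) * (Real.pi/m) = Real.pi := by field_simp
    rw [this, Real.sin_pi, zero_div]



def ast (P Q a b : ℝ) : ℕ → ℝ × ℝ × ℝ × ℝ
  | 0 => (a, b, 0, 0)
  | t+1 =>
    let p := ast P Q a b t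
    if t % 2 = 0 then (-p.1, p.2.1 + P * p.1, p.2.2.1 + p.1, p.2.2.2)
    else (p.1 + Q * p.2.1, -p.2.1, p.2.2.1, p.2.2.2 + p.2.1)

lemma ast_lin (P Q a b : ℝ) : ∀ t,
    (ast P Q a b t).1 = a - 2*(ast P Q a b t).2.2.1 + Q*(ast P Q a b t).2.2.2 ∧
    (ast P Q a b t).2.1 = b + P*(ast P Q a b t).2.2.1 - 2*(ast P Q a b t).2.2.2 := by
  intro t
  induction t with
  | zero => simp [ast]
  | succ t ih =>
    by_cases ht : t % 2 = 0 <;>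
      simp only [ast, ht, if_true, if_false, reduceIte] <;>
      exact ⟨by linear_combination ih.1, by linear_combination ih.2⟩

lemma ast_cf (c ρ a b' P Q : ℝ) (hP : P = c*ρ) (hQ : Q*ρ = c) : ∀ r : ℕ,
    (r % 2 = 0 →
      (ast P Q a (ρ*b') (r+1)).1 = -(cheb c (r+1)*a + cheb c r*b') ∧
      (ast P Q a (ρ*b') (r+1)).2.1 = ρ*(cheb c (r+2)*a + cheb c (r+1)*b')) ∧
    (r % 2 = 1 →
      (ast P Q a (ρ*b') (r+1)).1 = cheb c (r+2)*a + cheb c (r+1)*b' ∧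
      (ast P Q a (ρ*b') (r+1)).2.1 = -(ρ*(cheb c (r+1)*a + cheb c r*b'))) := by
  intro r
  induction r with
  | zero =>
    constructor
    · intro _
      constructor
      · show -a = _
        simp [cheb]
      · show ρ*b' + P*a = _
        rw [hP, cheb_two]
        simp [cheb]
        ring
    · intro h; exact absurd h (by omega)
  | succ r ih =>
    by_cases hr : r % 2 = 0
    · -- r even, so step t = r+1 is odd: fire j
      obtain ⟨hx, hy⟩ := ih.1 hr
      constructor
      · intro h; omega
      · intro _
        have hstep : (ast P Q a (ρ*b') (r+2)) =
            ((ast P Q a (ρ*b') (r+1)).1 + Q * (ast P Q a (ρ*b') (r+1)).2.1,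
             -(ast P Q a (ρ*b') (r+1)).2.1,
             (ast P Q a (ρ*b') (r+1)).2.2.1,
             (ast P Q a (ρ*b') (r+1)).2.2.2 + (ast P Q a (ρ*b') (r+1)).2.1) := by
          show (if (r+1) % 2 = 0 then _ else _) = _
          have : ¬((r+1) % 2 = 0) := by omega
          simp [this]
        rw [hstep]
        constructor
        · show _ + Q * _ = _
          rw [hx, hy]
          linear_combination (cheb c (r+2)*a + cheb c (r+1)*b') * hQ
            - a * (cheb_two c (r+1)) - b' * (cheb_two c r)
        · show -(_) = _
          rw [hy]
    · -- r odd, step t = r+1 even: fire i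
      have hr1 : r % 2 = 1 := by omega
      obtain ⟨hx, hy⟩ := ih.2 hr1
      constructor
      · intro _
        have hstep : (ast P Q a (ρ*b') (r+2)) =
            (-(ast P Q a (ρ*b') (r+1)).1,
             (ast P Q a (ρ*b') (r+1)).2.1 + P * (ast P Q a (ρ*b') (r+1)).1,
             (ast P Q a (ρ*b') (r+1)).2.2.1 + (ast P Q a (ρ*b') (r+1)).1,
             (ast P Q a (ρ*b') (r+1)).2.2.2) := by
          show (if (r+1) % 2 = 0 then _ else _) = _
          have : (r+1) % 2 = 0 := by omega
          simp [this]
        rw [hstep]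
        constructor
        · show -(_) = _
          rw [hx]
        · show _ + P * _ = _
          rw [hx, hy, hP]
          linear_combination (-(ρ*a)) * (cheb_two c (r+1)) - (ρ*b') * (cheb_two c r)
      · intro h; omega


lemma ast_fired_pos (c ρ a b' P Q : ℝ) (hP : P = c*ρ) (hQ : Q*ρ = c) (hρ : 0 < ρ)
    (ha : 0 < a) (hb : 0 < b') (s : ℕ) (h1 : 1 ≤ s)
    (hSpos : 0 < cheb c s) (hSnn : 0 ≤ cheb c (s+1)) :
    (s % 2 = 0 → 0 < (ast P Q a (ρ*b') s).1) ∧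
    (s % 2 = 1 → 0 < (ast P Q a (ρ*b') s).2.1) := by
  obtain ⟨r, rfl⟩ : ∃ r, s = r + 1 := ⟨s-1, by omega⟩
  have hcf := ast_cf c ρ a b' P Q hP hQ r
  constructor
  · intro he
    have hr : r % 2 = 1 := by omega
    rw [(hcf.2 hr).1]
    nlinarith [mul_nonneg hSnn ha.le, mul_pos hSpos hb]
  · intro ho
    have hr : r % 2 = 0 := by omega
    rw [(hcf.1 hr).2]
    apply mul_pos hρ
    nlinarith [mul_nonneg hSnn ha.le, mul_pos hSpos hb]

end NGAux

namespace EGCM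

variable {ι : Type*} [Fintype ι]

/-- The alternating list `[i, j, i, j, ...]` of length `t`. -/
def altL (i j : ι) (t : ℕ) : List ι :=
  (List.range t).map (fun s => if s % 2 = 0 then i else j)

lemma altL_succ (i j : ι) (t : ℕ) :
    altL i j (t+1) = altL i j t ++ [if t % 2 = 0 then i else j] := by
  simp [altL, List.range_succ]

lemma fireList_append (E : EGCM ι) (s t : List ι) : ∀ lam : ι → ℝ,
    E.fireList lam (s ++ t) = E.fireList (E.fireList lam s) t := by
  induction s with
  | nil => intro lam; rfl
  | cons a s ih => intro lam; simp only [List.cons_append, fireList]; exact ih _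

lemma legal_append (E : EGCM ι) (s t : List ι) : ∀ lam : ι → ℝ,
    E.Legal lam (s ++ t) ↔ E.Legal lam s ∧ E.Legal (E.fireList lam s) t := by
  induction s with
  | nil => intro lam; simp [Legal, fireList]
  | cons a s ih =>
    intro lam
    show (0 < lam a ∧ E.Legal (E.fire lam a) (s ++ t)) ↔
      (0 < lam a ∧ E.Legal (E.fire lam a) s) ∧ E.Legal (E.fireList (E.fire lam a) s) t
    rw [ih]
    tauto

lemma fireList_altL (E : EGCM ι) (lam : ι → ℝ) (i j : ι) : ∀ t,
    E.fireList lam (altL i j t) = fun k =>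
      lam k - (NGAux.ast (-E.M i j) (-E.M j i) (lam i) (lam j) t).2.2.1 * E.M i k
            - (NGAux.ast (-E.M i j) (-E.M j i) (lam i) (lam j) t).2.2.2 * E.M j k := by
  intro t
  induction t with
  | zero =>
    funext k
    simp [altL, fireList, NGAux.ast]
  | succ t ih =>
    have hlin := NGAux.ast_lin (-E.M i j) (-E.M j i) (lam i) (lam j) t
    have hsingle : ∀ (mu : ι → ℝ) (k : ι), E.fireList mu [k] = E.fire mu k :=
      fun mu k => rfl
    rw [altL_succ, fireList_append, ih, hsingle]
    by_cases ht : t % 2 = 0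
    · simp only [ht, if_true, reduceIte]
      funext k
      simp only [fire, NGAux.ast, ht, if_true, reduceIte]
      rw [E.diag i]
      linear_combination (E.M i k) * hlin.1
    · simp only [ht, if_false, reduceIte]
      funext k
      simp only [fire, NGAux.ast, ht, if_false, reduceIte]
      rw [E.diag j]
      linear_combination (E.M j k) * hlin.2

lemma altL_coord (E : EGCM ι) (lam : ι → ℝ) (i j : ι) (t : ℕ) :
    E.fireList lam (altL i j t) i = (NGAux.ast (-E.M i j) (-E.M j i) (lam i) (lam j) t).1 ∧
    E.fireList lam (altL i j t) j = (NGAux.ast (-E.M i j) (-E.M j i) (lam i) (lam j) t).2.1 := by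
  have hlin := NGAux.ast_lin (-E.M i j) (-E.M j i) (lam i) (lam j) t
  rw [fireList_altL]
  constructor
  · show lam i - _ * E.M i i - _ * E.M j i = _
    rw [E.diag i]
    linear_combination -hlin.1
  · show lam j - _ * E.M i j - _ * E.M j j = _
    rw [E.diag j]
    linear_combination -hlin.2

lemma legal_altL (E : EGCM ι) (lam : ι → ℝ) (i j : ι) : ∀ t : ℕ,
    (∀ s, s < t → 0 < E.fireList lam (altL i j s) (if s % 2 = 0 then i else j)) →
    E.Legal lam (altL i j t) := by
  intro t
  induction t with
  | zero => intro _; trivial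
  | succ t ih =>
    intro h
    rw [altL_succ, legal_append]
    exact ⟨ih (fun s hs => h s (by omega)), h t (by omega), trivial⟩

lemma rank2_core (E : EGCM ι) (i j : ι) (lam : ι → ℝ)
    (hij : E.M i j < 0) (hji : E.M j i < 0)
    (c : ℝ) (hc : 0 < c) (hcc : c^2 = E.M i j * E.M j i)
    (ha : 0 < lam i) (hb : 0 < lam j) :
    ∀ s : ℕ, 1 ≤ s → 0 < NGAux.cheb c s → 0 ≤ NGAux.cheb c (s+1) →
      0 < E.fireList lam (altL i j s) (if s % 2 = 0 then i else j) := by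
  intro s h1 hSpos hSnn
  set P := -E.M i j with hPdef
  set Q := -E.M j i with hQdef
  have hPpos : 0 < P := by simp [hPdef]; linarith
  have hQpos : 0 < Q := by simp [hQdef]; linarith
  set ρ := P / c with hρdef
  have hρ : 0 < ρ := div_pos hPpos hc
  set b' := lam j / ρ with hb'def
  have hb' : 0 < b' := div_pos hb hρ
  have hbj : ρ * b' = lam j := mul_div_cancel₀ _ (ne_of_gt hρ)
  have hP : P = c * ρ := by
    rw [hρdef]; field_simp
  have hQ : Q * ρ = c := by
    rw [hρdef]
    have : Q * P = c^2 := by rw [hcc]; ring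
    field_simp
    linarith [this]
  have key := NGAux.ast_fired_pos c ρ (lam i) b' P Q hP hQ hρ ha hb' s h1 hSpos hSnn
  rw [hbj] at key
  have hco := altL_coord E lam i j s
  by_cases hs2 : s % 2 = 0
  · simp only [hs2, if_true, reduceIte]
    rw [hco.1]
    exact key.1 hs2
  · simp only [hs2, if_false, reduceIte]
    rw [hco.2]
    exact key.2 (by omega)

lemma rank2_pos_fin (E : EGCM ι) (i j : ι) (lam : ι → ℝ) (m : ℕ) (hm : 3 ≤ m)
    (hij : E.M i j < 0) (hji : E.M j i < 0)
    (hcos : E.M i j * E.M j i = 4 * Real.cos (Real.pi / m) ^ 2)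
    (ha : 0 < lam i) (hb : 0 < lam j) :
    ∀ s, s < m → 0 < E.fireList lam (altL i j s) (if s % 2 = 0 then i else j) := by
  intro s hs
  rcases Nat.eq_zero_or_pos s with rfl | h1
  · simpa [altL, fireList] using ha
  · have hm0 : (0:ℝ) < m := by positivity
    have hm3 : (3:ℝ) ≤ m := by exact_mod_cast hm
    have hcpos : 0 < Real.cos (Real.pi / m) := by
      apply Real.cos_pos_of_mem_Ioo
      constructor
      · have := Real.pi_pos
        have : 0 < Real.pi / m := by positivity
        linarith [Real.pi_pos]
      · rw [div_lt_iff₀ hm0]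
        nlinarith [Real.pi_pos]
    have hcc : (2 * Real.cos (Real.pi / m))^2 = E.M i j * E.M j i := by
      rw [hcos]; ring
    obtain ⟨hpos, hnn, _⟩ := NGAux.cheb_m m hm
    exact rank2_core E i j lam hij hji _ (by linarith) hcc ha hb s h1
      (hpos s h1 (by omega)) (hnn (s+1) (by omega))

lemma rank2_pos_inf (E : EGCM ι) (i j : ι) (lam : ι → ℝ)
    (hij : E.M i j < 0) (hji : E.M j i < 0)
    (h4 : 4 ≤ E.M i j * E.M j i)
    (ha : 0 < lam i) (hb : 0 < lam j) :
    ∀ s, 0 < E.fireList lam (altL i j s) (if s % 2 = 0 then i else j) := by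
  intro s
  rcases Nat.eq_zero_or_pos s with rfl | h1
  · simpa [altL, fireList] using ha
  · set c := Real.sqrt (E.M i j * E.M j i) with hcdef
    have hc2 : c^2 = E.M i j * E.M j i := Real.sq_sqrt (by linarith)
    have hcge : 2 ≤ c := by
      rw [hcdef, show (2:ℝ) = Real.sqrt 4 by
        rw [show (4:ℝ) = 2^2 by norm_num, Real.sqrt_sq]; norm_num]
      exact Real.sqrt_le_sqrt h4
    have hge := NGAux.cheb_ge c hcge
    obtain ⟨r, rfl⟩ : ∃ r, s = r + 1 := ⟨s-1, by omega⟩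
    exact rank2_core E i j lam hij hji c (by linarith) hc2 ha hb (r+1) h1
      ((hge r).2.2.trans_lt' one_pos) ((hge (r+1)).1.trans (hge (r+1)).2.1)

set_option maxHeartbeats 1000000 in
lemma rank2_eq_fin (E : EGCM ι) (i j : ι) (lam : ι → ℝ) (m : ℕ) (hm : 3 ≤ m)
    (hij : E.M i j < 0) (hji : E.M j i < 0)
    (hcos : E.M i j * E.M j i = 4 * Real.cos (Real.pi / m) ^ 2)
    (ha : 0 < lam i) (hb : 0 < lam j) :
    E.fireList lam (altL i j m) = E.fireList lam (altL j i m) := by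
  have hm0 : (0:ℝ) < m := by positivity
  have hm3 : (3:ℝ) ≤ m := by exact_mod_cast hm
  have hθpos : 0 < Real.pi / m := by positivity
  have hθlt : Real.pi / m < Real.pi := by
    rw [div_lt_iff₀ hm0]; nlinarith [Real.pi_pos]
  have hsin : 0 < Real.sin (Real.pi / m) := Real.sin_pos_of_pos_of_lt_pi hθpos hθlt
  have hcpos : 0 < Real.cos (Real.pi / m) := by
    apply Real.cos_pos_of_mem_Ioo
    constructor
    · linarith
    · rw [div_lt_iff₀ hm0]; nlinarith [Real.pi_pos]
  set c := 2 * Real.cos (Real.pi / m) with hcdef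
  have hc : 0 < c := by positivity
  set P := -E.M i j with hPdef
  set Q := -E.M j i with hQdef
  have hPpos : 0 < P := by simp [hPdef]; linarith
  have hQpos : 0 < Q := by simp [hQdef]; linarith
  have hPQ : P * Q = c^2 := by
    rw [hPdef, hQdef, hcdef]; linear_combination hcos
  have hPQ4 : P * Q < 4 := by
    have h1 : Real.sin (Real.pi / m)^2 + Real.cos (Real.pi / m)^2 = 1 :=
      Real.sin_sq_add_cos_sq _
    nlinarith [sq_nonneg (Real.sin (Real.pi / m))]
  set ρ := P / c with hρdef
  have hρ : 0 < ρ := div_pos hPpos hc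
  set ρ₂ := Q / c with hρ₂def
  have hρ₂ : 0 < ρ₂ := div_pos hQpos hc
  set b' := lam j / ρ with hb'def
  set a' := lam i / ρ₂ with ha'def
  have hbj : ρ * b' = lam j := mul_div_cancel₀ _ (ne_of_gt hρ)
  have hai : ρ₂ * a' = lam i := mul_div_cancel₀ _ (ne_of_gt hρ₂)
  have hP : P = c * ρ := by rw [hρdef]; field_simp
  have hQ : Q * ρ = c := by
    rw [hρdef]; field_simp; linear_combination hPQ
  have hP2 : Q = c * ρ₂ := by rw [hρ₂def]; field_simp
  have hQ2 : P * ρ₂ = c := by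
    rw [hρ₂def]; field_simp; linear_combination hPQ
  have hρρ₂ : ρ * ρ₂ = 1 := by
    rw [hρdef, hρ₂def]; field_simp; linear_combination hPQ
  obtain ⟨r, hr⟩ : ∃ r, m = r + 1 := ⟨m - 1, by omega⟩
  have h0 : NGAux.cheb c (r+1) = 0 := by
    have h := (NGAux.cheb_m m hm).2.2
    rw [← hcdef, hr] at h
    exact h
  have hneg : NGAux.cheb c (r+2) = -NGAux.cheb c r := by
    rw [NGAux.cheb_two, h0]; ring
  have CF1 := NGAux.ast_cf c ρ (lam i) b' P Q hP hQ r
  have CF2 := NGAux.ast_cf c ρ₂ (lam j) a' Q P hP2 hQ2 r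
  rw [hbj] at CF1
  rw [hai] at CF2
  have ha'eq : a' = ρ * lam i := by linear_combination ρ * hai - a' * hρρ₂
  have hb'eq : b' = ρ₂ * lam j := by linear_combination ρ₂ * hbj - b' * hρρ₂
  have lin1 := NGAux.ast_lin P Q (lam i) (lam j) m
  have lin2 := NGAux.ast_lin Q P (lam j) (lam i) m
  set F := NGAux.ast P Q (lam i) (lam j) m with hF
  set G := NGAux.ast Q P (lam j) (lam i) m with hG
  have hFr : F = NGAux.ast P Q (lam i) (lam j) (r+1) := by rw [hF, hr]
  have hGr : G = NGAux.ast Q P (lam j) (lam i) (r+1) := by rw [hG, hr]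
  -- the cross identities G.1 = F.2.1 and G.2.1 = F.1
  have hcross : G.1 = F.2.1 ∧ G.2.1 = F.1 := by
    rcases Nat.even_or_odd r with he | ho
    · have hre : r % 2 = 0 := Nat.even_iff.mp he
      obtain ⟨hx1, hy1⟩ := CF1.1 hre
      obtain ⟨hx2, hy2⟩ := CF2.1 hre
      rw [hFr, hGr, hx1, hy1, hx2, hy2, h0, hneg]
      constructor
      · rw [ha'eq]; ring
      · rw [hb'eq]; ring
    · have hro : r % 2 = 1 := Nat.odd_iff.mp ho
      obtain ⟨hx1, hy1⟩ := CF1.2 hro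
      obtain ⟨hx2, hy2⟩ := CF2.2 hro
      rw [hFr, hGr, hx1, hy1, hx2, hy2, h0, hneg]
      constructor
      · rw [← hbj]; ring
      · rw [← hai]; ring
  obtain ⟨hxy, hyx⟩ := hcross
  have e1 : F.1 = lam i - 2*F.2.2.1 + Q*F.2.2.2 := lin1.1
  have e2 : F.2.1 = lam j + P*F.2.2.1 - 2*F.2.2.2 := lin1.2
  have e3 : F.2.1 = lam j - 2*G.2.2.1 + P*G.2.2.2 := by rw [← hxy]; exact lin2.1
  have e4 : F.1 = lam i + Q*G.2.2.1 - 2*G.2.2.2 := by rw [← hyx]; exact lin2.2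
  have hu : (4 - P*Q)*(F.2.2.1 - G.2.2.2) = 0 := by
    linear_combination (2:ℝ)*e1 - 2*e4 + Q*e2 - Q*e3
  have hAB : F.2.2.1 = G.2.2.2 := by
    have h4ne : (4:ℝ) - P*Q ≠ 0 := by linarith
    have := (mul_eq_zero.mp hu).resolve_left h4ne
    linarith [this]
  have hBA : F.2.2.2 = G.2.2.1 := by
    have h6 : 2*(F.2.2.2 - G.2.2.1) = P*(F.2.2.1 - G.2.2.2) := by
      linear_combination e2 - e3
    rw [hAB] at h6
    simp at h6
    linarith [h6]
  rw [fireList_altL E lam i j m, fireList_altL E lam j i m]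
  funext k
  show lam k - F.2.2.1 * E.M i k - F.2.2.2 * E.M j k
    = lam k - G.2.2.1 * E.M j k - G.2.2.2 * E.M i k
  rw [hAB, hBA]
  ring

lemma iterKey (E : EGCM ι) (n : ℕ)
    (IH : ∀ k, k < n → ∀ (lam : ι → ℝ) (s : List ι), E.IsGameSeq lam s → s.length ≤ k →
      ∀ j, 0 < lam j → ∃ s', E.IsGameSeq (E.fire lam j) s' ∧ s'.length < k)
    (lam : ι → ℝ) (i j : ι) (T : ℕ)
    (hpos : ∀ s, s < T → 0 < E.fireList lam (altL i j s) (if s % 2 = 0 then i else j))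
    (tail : List ι) (h0 : E.IsGameSeq (E.fire lam i) tail) (hlen : tail.length + 1 ≤ n) :
    ∀ t, t < T → ∃ g, E.IsGameSeq (E.fireList lam (altL i j (t+1))) g ∧ g.length + (t+1) ≤ n := by
  intro t
  induction t with
  | zero =>
    intro _
    have h1 : E.fireList lam (altL i j 1) = E.fire lam i := by
      simp [altL, fireList]
    rw [h1]
    exact ⟨tail, h0, hlen⟩
  | succ t ih =>
    intro hT
    obtain ⟨g, hg, hglen⟩ := ih (by omega)
    have hnode := hpos (t+1) hT
    have hn1 : 0 < n := by omega
    obtain ⟨g2, hg2, hg2len⟩ :=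
      IH (n - (t+1)) (by omega) _ g hg (by omega) _ hnode
    refine ⟨g2, ?_, by omega⟩
    have hstep : E.fire (E.fireList lam (altL i j (t+1))) (if (t+1) % 2 = 0 then i else j)
        = E.fireList lam (altL i j (t+2)) := by
      rw [altL_succ i j (t+1), fireList_append]
      rfl
    rw [← hstep]
    exact hg2

theorem stepDown (E : EGCM ι) : ∀ n : ℕ, ∀ (lam : ι → ℝ) (s : List ι),
    E.IsGameSeq lam s → s.length ≤ n → ∀ j, 0 < lam j →
    ∃ s', E.IsGameSeq (E.fire lam j) s' ∧ s'.length < n := by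
  intro n
  induction n using Nat.strong_induction_on with
  | _ n IH =>
    intro lam s hs hlen j hj
    cases s with
    | nil => exact absurd hj (not_lt.mpr (hs.2 j))
    | cons i tail =>
      obtain ⟨⟨hi, hleg⟩, hterm⟩ := hs
      have htail : E.IsGameSeq (E.fire lam i) tail := ⟨hleg, hterm⟩
      have hn : tail.length + 1 ≤ n := by simpa using hlen
      by_cases hji : j = i
      · subst hji; exact ⟨tail, htail, by omega⟩
      · have hij : i ≠ j := fun h => hji h.symm
        by_cases hz : E.M i j = 0
        · have hzji : E.M j i = 0 := (E.zero_iff i j).mp hz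
          have hjpos : 0 < E.fire lam i j := by
            simp only [fire, hz, zero_mul, sub_zero]; exact hj
          obtain ⟨s2, hs2, hlen2⟩ := IH (n-1) (by omega) _ tail htail (by omega) j hjpos
          have comm : E.fire (E.fire lam i) j = E.fire (E.fire lam j) i := by
            funext k; simp only [fire, hz, hzji]; ring
          refine ⟨i :: s2, ⟨⟨?_, ?_⟩, ?_⟩, ?_⟩
          · show 0 < E.fire lam j i
            simp only [fire, hzji, zero_mul, sub_zero]; exact hi
          · show E.Legal (E.fire (E.fire lam j) i) s2
            rw [← comm]; exact hs2.1
          · show Terminal (E.fireList (E.fire (E.fire lam j) i) s2)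
            rw [← comm]; exact hs2.2
          · simp only [List.length_cons]; omega
        · have hzji : E.M j i ≠ 0 := fun h => hz ((E.zero_iff j i).mp h)
          have hij' : E.M i j < 0 := lt_of_le_of_ne (E.offDiag_nonpos i j hij) hz
          have hji' : E.M j i < 0 := lt_of_le_of_ne (E.offDiag_nonpos j i (Ne.symm hij)) hzji
          rcases E.prod_cond i j hij (mul_ne_zero hz hzji) with h4 | ⟨m, hm3, hcos⟩
          · exfalso
            have hpos := rank2_pos_inf E i j lam hij' hji' h4 hi hj
            obtain ⟨g, hg, hglen⟩ := iterKey E n IH lam i j (n+2)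
              (fun s _ => hpos s) tail htail hn (n+1) (by omega)
            omega
          · have hposij := rank2_pos_fin E i j lam m hm3 hij' hji' hcos hi hj
            have hposji := rank2_pos_fin E j i lam m hm3 hji' hij'
              (by rw [mul_comm]; exact hcos) hj hi
            obtain ⟨g, hg, hglen⟩ := iterKey E n IH lam i j m hposij tail htail hn
              (m-1) (by omega)
            have hm1 : m - 1 + 1 = m := by omega
            rw [hm1] at hg hglen
            obtain ⟨r, hr⟩ : ∃ r, m = r + 1 := ⟨m - 1, by omega⟩
            have hcons : altL j i m
                = j :: (List.range r).map (fun s => if (s+1) % 2 = 0 then j else i) := by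
              rw [hr]
              simp [altL, List.range_succ_eq_map, List.map_map, Function.comp_def]
            set rest := (List.range r).map (fun s => if (s+1) % 2 = 0 then j else i)
              with hrest
            have hlegji : E.Legal lam (altL j i m) := legal_altL E lam j i m hposji
            rw [hcons] at hlegji
            have hrestleg : E.Legal (E.fire lam j) rest := hlegji.2
            have hfr : E.fireList (E.fire lam j) rest = E.fireList lam (altL i j m) := by
              calc E.fireList (E.fire lam j) rest = E.fireList lam (altL j i m) := by
                    rw [hcons]; rfl
              _ = E.fireList lam (altL i j m) :=
                    (rank2_eq_fin E i j lam m hm3 hij' hji' hcos hi hj).symm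
            refine ⟨rest ++ g, ⟨?_, ?_⟩, ?_⟩
            · rw [legal_append]
              exact ⟨hrestleg, by rw [hfr]; exact hg.1⟩
            · show Terminal (E.fireList (E.fire lam j) (rest ++ g))
              rw [fireList_append, hfr]
              exact hg.2
            · have hrl : rest.length = r := by simp [hrest]
              simp only [List.length_append, hrl]
              omega

lemma posAt_shift (E : EGCM ι) (lam : ι → ℝ) (f : ℕ → ι) :
    ∀ k, E.posAt (E.fire lam (f 0)) (fun t => f (t+1)) k = E.posAt lam f (k+1) := by
  intro k
  induction k with
  | zero => rfl
  | succ k ih =>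
    show E.fire (E.posAt (E.fire lam (f 0)) (fun t => f (t+1)) k) (f (k+1)) = _
    rw [ih]
    rfl

lemma noDiv (E : EGCM ι) : ∀ n : ℕ, ∀ (lam : ι → ℝ) (s : List ι) (f : ℕ → ι),
    E.IsGameSeq lam s → s.length ≤ n → E.DivergentSeq lam f → False := by
  intro n
  induction n with
  | zero =>
    intro lam s f hs hl hf
    obtain ⟨s', _, h⟩ := stepDown E 0 lam s hs hl (f 0) (hf 0)
    omega
  | succ n ih =>
    intro lam s f hs hl hf
    obtain ⟨s', hs', hlen⟩ := stepDown E (n+1) lam s hs hl (f 0) (hf 0)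
    refine ih (E.fire lam (f 0)) s' (fun t => f (t+1)) hs' (by omega) ?_
    intro k
    rw [posAt_shift]
    exact hf (k+1)

end EGCM

/-- **Lemma 2.2.** For any E-GCM graph, if a game sequence for an initial position `lam`
diverges, then all game sequences for `lam` diverge (there is no convergent game sequence). -/
theorem egcm_divergent_forces_all_divergent {ι : Type*} [Fintype ι] (E : EGCM ι)
    (lam : ι → ℝ) (hdiv : ∃ f : ℕ → ι, E.DivergentSeq lam f) :
    ¬ ∃ s : List ι, E.IsGameSeq lam s := by
  rintro ⟨s, hs⟩
  obtain ⟨f, hf⟩ := hdiv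
  exact EGCM.noDiv E s.length lam s f hs le_rfl hf
end

section
/- Let λ be a dominant position on an E-GCM graph with λ_j > 0 for some j ∈ I_n. If some game sequence from λ converges, then some game sequence from the fundamental position ω_j also converges. -/
set_option linter.unusedSectionVars false
namespace EGCMAux

open EGCM Real CoxeterSystem List

variable {ι : Type*} [Fintype ι] [DecidableEq ι]

/-- Pairing between positions and vectors. -/
def pair (p v : ι → ℝ) : ℝ := ∑ k, p k * v k

lemma sum_mul_single (f : ι → ℝ) (i : ι) : ∑ k, f k * (Pi.single i 1 : ι → ℝ) k = f i := by
  rw [Finset.sum_eq_single i]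
  · simp
  · intro k _ hk
    simp [Pi.single_apply, hk]
  · simp

lemma pair_single_right (p : ι → ℝ) (z : ι) : pair p (Pi.single z 1) = p z :=
  sum_mul_single p z

lemma pair_single_left (v : ι → ℝ) (z : ι) : pair ((Pi.single z 1 : ι → ℝ)) v = v z := by
  unfold pair
  rw [Finset.sum_eq_single z]
  · simp
  · intro k _ hk
    simp [Pi.single_apply, hk]
  · simp

lemma S_apply_coord (E : EGCM ι) (i : ι) (v : ι → ℝ) (l : ι) :
    E.S i v l = v l - (∑ k, E.M i k * v k) * (Pi.single i 1 : ι → ℝ) l := by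
  simp only [EGCM.S, LinearMap.sub_apply, LinearMap.id_apply, LinearMap.smulRight_apply,
    Pi.sub_apply, Pi.smul_apply, smul_eq_mul, LinearMap.coe_sum, Finset.sum_apply,
    LinearMap.smul_apply, LinearMap.proj_apply]

lemma pair_fire (E : EGCM ι) (p v : ι → ℝ) (i : ι) :
    pair (E.fire p i) v = pair p (E.S i v) := by
  have h1 : pair p (E.S i v) = pair p v - (∑ k, E.M i k * v k) * p i := by
    unfold pair
    calc ∑ k, p k * E.S i v k
        = ∑ k, (p k * v k - (∑ l, E.M i l * v l) * (p k * (Pi.single i 1 : ι → ℝ) k)) := by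
          apply Finset.sum_congr rfl
          intro k _
          rw [S_apply_coord]
          ring
      _ = pair p v - (∑ l, E.M i l * v l) * p i := by
          rw [Finset.sum_sub_distrib, ← Finset.mul_sum, sum_mul_single]
          rfl
  have h2 : pair (E.fire p i) v = pair p v - (∑ k, E.M i k * v k) * p i := by
    unfold pair EGCM.fire
    calc ∑ k, (p k - E.M i k * p i) * v k
        = ∑ k, (p k * v k - (E.M i k * v k) * p i) := by
          apply Finset.sum_congr rfl
          intro k _
          ring
      _ = pair p v - (∑ k, E.M i k * v k) * p i := by
          rw [Finset.sum_sub_distrib, ← Finset.sum_mul]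
          rfl
  rw [h1, h2]

lemma S_invol (E : EGCM ι) (i : ι) : E.S i * E.S i = 1 := by
  apply LinearMap.ext
  intro v
  simp only [Module.End.mul_apply, Module.End.one_apply]
  have hC : (∑ k, E.M i k * E.S i v k) = - (∑ k, E.M i k * v k) := by
    calc ∑ k, E.M i k * E.S i v k
        = ∑ k, (E.M i k * v k - (∑ l, E.M i l * v l) * (E.M i k * (Pi.single i 1 : ι → ℝ) k)) := by
          apply Finset.sum_congr rfl
          intro k _
          rw [S_apply_coord]
          ring
      _ = (∑ k, E.M i k * v k) - (∑ l, E.M i l * v l) * E.M i i := by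
          rw [Finset.sum_sub_distrib, ← Finset.mul_sum, sum_mul_single]
      _ = - (∑ k, E.M i k * v k) := by rw [E.diag]; ring
  funext l
  rw [S_apply_coord, S_apply_coord, hC]
  ring

end EGCMAux

set_option linter.unusedSectionVars false

namespace EGCMAux

open EGCM Real CoxeterSystem List

variable {ι : Type*} [Fintype ι] [DecidableEq ι]

lemma cos_sq_lt_four {k : ℕ} (hk : 2 ≤ k) : 4 * Real.cos (Real.pi / k) ^ 2 < 4 := by
  have hkpos : (0:ℝ) < k := by positivity
  have hx1 : 0 < Real.pi / k := by positivity
  have hx2 : Real.pi / k ≤ Real.pi / 2 := by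
    apply div_le_div_of_nonneg_left Real.pi_pos.le (by norm_num)
    exact_mod_cast hk
  have hcos_lt : Real.cos (Real.pi / k) < 1 := by
    have := Real.cos_lt_cos_of_nonneg_of_le_pi (le_refl 0) (by linarith [Real.pi_pos]) hx1
    simpa using this
  have hcos_nonneg : 0 ≤ Real.cos (Real.pi / k) := by
    apply Real.cos_nonneg_of_mem_Icc
    constructor <;> [linarith [Real.pi_pos]; linarith]
  nlinarith

lemma m_eq_two_of_M_eq_zero (E : EGCM ι) {i j : ι} (hij : i ≠ j) (h : E.M i j = 0) :
    E.m i j = 2 := by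
  classical
  have hji : E.M j i = 0 := (E.zero_iff i j).mp h
  have hval : E.M i j * E.M j i = 4 * Real.cos (Real.pi / (2:ℕ)) ^ 2 := by
    rw [h, hji]
    norm_num [Real.cos_pi_div_two]
  have hex : ∃ k : ℕ, 2 ≤ k ∧ E.M i j * E.M j i = 4 * Real.cos (Real.pi / k) ^ 2 :=
    ⟨2, le_refl 2, hval⟩
  unfold EGCM.m
  rw [if_neg hij, dif_pos hex]
  have h2 := (Nat.find_spec hex).1
  have hle : Nat.find hex ≤ 2 := Nat.find_le ⟨le_refl 2, hval⟩
  omega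

lemma m_cases (E : EGCM ι) {i j : ι} (hij : i ≠ j) (hM : E.M i j ≠ 0) :
    (E.m i j = 0 ∧ 4 ≤ E.M i j * E.M j i) ∨
    (3 ≤ E.m i j ∧ E.M i j * E.M j i = 4 * Real.cos (Real.pi / (E.m i j : ℝ)) ^ 2) := by
  classical
  have hMji : E.M j i ≠ 0 := fun h => hM ((E.zero_iff j i).mp h)
  have hprod : E.M i j * E.M j i ≠ 0 := mul_ne_zero hM hMji
  rcases E.prod_cond i j hij hprod with h4 | ⟨k, hk3, hk⟩
  · left
    refine ⟨?_, h4⟩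
    unfold EGCM.m
    rw [if_neg hij, dif_neg]
    rintro ⟨n, hn2, hneq⟩
    have := cos_sq_lt_four hn2
    rw [← hneq] at this
    linarith
  · right
    have hex : ∃ n : ℕ, 2 ≤ n ∧ E.M i j * E.M j i = 4 * Real.cos (Real.pi / n) ^ 2 :=
      ⟨k, by omega, hk⟩
    have hm : E.m i j = Nat.find hex := by
      unfold EGCM.m
      rw [if_neg hij, dif_pos hex]
    have hs := Nat.find_spec hex
    rw [hm]
    refine ⟨?_, hs.2⟩
    rcases hs with ⟨h2, heq⟩
    by_contra hlt
    have hfind2 : Nat.find hex = 2 := by omega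
    rw [hfind2] at heq
    norm_num [Real.cos_pi_div_two] at heq
    rcases heq with h | h
    · exact hM h
    · exact hMji h

/-- The three mutually exclusive possibilities for `E.cox i j`, `i ≠ j`. -/
lemma cox_cases (E : EGCM ι) {i j : ι} (hij : i ≠ j) :
    (E.cox i j = 2 ∧ E.M i j = 0 ∧ E.M j i = 0) ∨
    (E.cox i j = 0 ∧ 4 ≤ E.M i j * E.M j i ∧ E.M i j ≠ 0 ∧ E.M j i ≠ 0) ∨
    (3 ≤ E.cox i j ∧ E.M i j * E.M j i = 4 * Real.cos (Real.pi / (E.cox i j : ℝ)) ^ 2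
      ∧ E.M i j ≠ 0 ∧ E.M j i ≠ 0) := by
  have hcox : E.cox i j = E.m i j := rfl
  by_cases hM : E.M i j = 0
  · left
    exact ⟨hcox ▸ m_eq_two_of_M_eq_zero E hij hM, hM, (E.zero_iff i j).mp hM⟩
  · have hMji : E.M j i ≠ 0 := fun h => hM ((E.zero_iff j i).mp h)
    rcases m_cases E hij hM with ⟨h0, h4⟩ | ⟨h3, heq⟩
    · right; left
      exact ⟨hcox ▸ h0, h4, hM, hMji⟩
    · right; right
      exact ⟨hcox ▸ h3, hcox ▸ heq, hM, hMji⟩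

end EGCMAux

namespace EGCMAux

open EGCM Real CoxeterSystem List

variable {ι : Type*} [Fintype ι] [DecidableEq ι]

lemma S_apply (E : EGCM ι) (i : ι) (v : ι → ℝ) :
    E.S i v = v - (∑ k, E.M i k * v k) • (Pi.single i 1 : ι → ℝ) := by
  funext l
  rw [S_apply_coord]
  simp [smul_eq_mul]

lemma S_fix (E : EGCM ι) {i : ι} {w : ι → ℝ} (h : ∑ k, E.M i k * w k = 0) :
    E.S i w = w := by
  rw [S_apply, h, zero_smul, sub_zero]

lemma phi_sub (E : EGCM ι) (i : ι) (v w : ι → ℝ) :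
    ∑ k, E.M i k * (v - w) k = (∑ k, E.M i k * v k) - ∑ k, E.M i k * w k := by
  rw [← Finset.sum_sub_distrib]
  apply Finset.sum_congr rfl
  intro k _
  simp [mul_sub]

lemma phi_add (E : EGCM ι) (i : ι) (v w : ι → ℝ) :
    ∑ k, E.M i k * (v + w) k = (∑ k, E.M i k * v k) + ∑ k, E.M i k * w k := by
  rw [← Finset.sum_add_distrib]
  apply Finset.sum_congr rfl
  intro k _
  simp [mul_add]

lemma phi_smul (E : EGCM ι) (i : ι) (c : ℝ) (v : ι → ℝ) :
    ∑ k, E.M i k * (c • v) k = c * ∑ k, E.M i k * v k := by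
  rw [Finset.mul_sum]
  apply Finset.sum_congr rfl
  intro k _
  simp [smul_eq_mul]
  ring

lemma phi_single (E : EGCM ι) (i l : ι) :
    ∑ k, E.M i k * (Pi.single l 1 : ι → ℝ) k = E.M i l :=
  sum_mul_single (E.M i) l

section TwoNodes

variable (E : EGCM ι) (z t : ι)

lemma phi_AB (i : ι) (A B : ℝ) :
    ∑ k, E.M i k * (A • (Pi.single z 1 : ι → ℝ) + B • (Pi.single t 1 : ι → ℝ)) k
      = A * E.M i z + B * E.M i t := by
  rw [phi_add, phi_smul, phi_smul, phi_single, phi_single]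

lemma S_AB (i : ι) (A B : ℝ) :
    E.S i (A • (Pi.single z 1 : ι → ℝ) + B • (Pi.single t 1 : ι → ℝ))
      = A • (Pi.single z 1 : ι → ℝ) + B • (Pi.single t 1 : ι → ℝ)
        - (A * E.M i z + B * E.M i t) • (Pi.single i 1 : ι → ℝ) := by
  rw [S_apply, phi_AB]

lemma St_AB {a : ℝ} (hMa : E.M t z = -a) (A B : ℝ) :
    E.S t (A • (Pi.single z 1 : ι → ℝ) + B • (Pi.single t 1 : ι → ℝ))
      = A • (Pi.single z 1 : ι → ℝ) + (a * A - B) • (Pi.single t 1 : ι → ℝ) := by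
  rw [S_AB, hMa, E.diag t]
  module

lemma Sz_AB {b : ℝ} (hMb : E.M z t = -b) (A B : ℝ) :
    E.S z (A • (Pi.single z 1 : ι → ℝ) + B • (Pi.single t 1 : ι → ℝ))
      = (b * B - A) • (Pi.single z 1 : ι → ℝ) + B • (Pi.single t 1 : ι → ℝ) := by
  rw [S_AB, hMb, E.diag z]
  module

end TwoNodes

lemma sin_shift (x c : ℝ) :
    Real.sin (x + 2*c) = 2 * Real.cos c * Real.sin (x + c) - Real.sin x := by
  have h1 : Real.sin (x + 2*c) = Real.sin (x+c) * Real.cos c + Real.cos (x+c) * Real.sin c := by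
    rw [← Real.sin_add]
    congr 1
    ring
  have h2 : Real.sin x = Real.sin (x+c) * Real.cos c - Real.cos (x+c) * Real.sin c := by
    rw [← Real.sin_sub]
    congr 1
    ring
  rw [h1, h2]
  ring

end EGCMAux

namespace EGCMAux

open EGCM Real CoxeterSystem List

variable {ι : Type*} [Fintype ι] [DecidableEq ι]

section Pow

variable (E : EGCM ι) (z t : ι) {a b θ : ℝ}

/-- Action of `(S z * S t)^k` on `e_z`: Chebyshev closed form. -/
lemma pow_apply_ez (hMa : E.M t z = -a) (hMb : E.M z t = -b)
    (hab : a * b = 4 * Real.cos θ ^ 2)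
    (hsin : Real.sin θ ≠ 0) (hcos : Real.cos θ ≠ 0) (k : ℕ) :
    ((E.S z * E.S t) ^ k) (Pi.single z 1 : ι → ℝ)
      = (2 * Real.cos θ * Real.sin (2*k*θ + θ) / (2 * Real.sin θ * Real.cos θ)) •
          (Pi.single z 1 : ι → ℝ)
        + (a * Real.sin (2*k*θ) / (2 * Real.sin θ * Real.cos θ)) •
          (Pi.single t 1 : ι → ℝ) := by
  have hD : (2 * Real.sin θ * Real.cos θ) ≠ 0 := by
    intro h
    rcases mul_eq_zero.mp h with h' | h'
    · rcases mul_eq_zero.mp h' with h'' | h''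
      · norm_num at h''
      · exact hsin h''
    · exact hcos h'
  induction k with
  | zero =>
    push_cast
    rw [show 2*(0:ℝ)*θ + θ = θ by ring, show 2*(0:ℝ)*θ = 0 by ring, Real.sin_zero]
    rw [show a * 0 / (2 * Real.sin θ * Real.cos θ) = 0 by ring]
    rw [show 2 * Real.cos θ * Real.sin θ / (2 * Real.sin θ * Real.cos θ)
        = 2 * Real.sin θ * Real.cos θ / (2 * Real.sin θ * Real.cos θ) by ring]
    rw [div_self hD, pow_zero, Module.End.one_apply]
    module
  | succ k ih =>
    rw [pow_succ', Module.End.mul_apply, ih, Module.End.mul_apply,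
      St_AB E z t hMa, Sz_AB E z t hMb]
    push_cast
    have S0 := sin_shift (2*(k:ℝ)*θ) θ
    have S1 : Real.sin (2*(k:ℝ)*θ + θ + 2*θ)
        = 2 * Real.cos θ * Real.sin (2*(k:ℝ)*θ + 2*θ) - Real.sin (2*(k:ℝ)*θ + θ) := by
      have h := sin_shift (2*(k:ℝ)*θ + θ) θ
      rw [show 2*(k:ℝ)*θ + θ + θ = 2*(k:ℝ)*θ + 2*θ by ring] at h
      exact h
    have hB : a * (2 * Real.cos θ * Real.sin (2*(k:ℝ)*θ + θ) / (2 * Real.sin θ * Real.cos θ))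
          - a * Real.sin (2*(k:ℝ)*θ) / (2 * Real.sin θ * Real.cos θ)
        = a * Real.sin (2*((k:ℝ)+1)*θ) / (2 * Real.sin θ * Real.cos θ) := by
      rw [show 2*((k:ℝ)+1)*θ = 2*(k:ℝ)*θ + 2*θ by ring, S0]
      ring
    rw [hB]
    have hA : b * (a * Real.sin (2*((k:ℝ)+1)*θ) / (2 * Real.sin θ * Real.cos θ))
          - 2 * Real.cos θ * Real.sin (2*(k:ℝ)*θ + θ) / (2 * Real.sin θ * Real.cos θ)
        = 2 * Real.cos θ * Real.sin (2*((k:ℝ)+1)*θ + θ) / (2 * Real.sin θ * Real.cos θ) := by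
      rw [show 2*((k:ℝ)+1)*θ + θ = 2*(k:ℝ)*θ + θ + 2*θ by ring, S1]
      rw [show 2*((k:ℝ)+1)*θ = 2*(k:ℝ)*θ + 2*θ by ring]
      rw [show b * (a * Real.sin (2*(k:ℝ)*θ + 2*θ) / (2 * Real.sin θ * Real.cos θ))
          = (a * b) * Real.sin (2*(k:ℝ)*θ + 2*θ) / (2 * Real.sin θ * Real.cos θ) by ring, hab]
      ring
    rw [hA]

/-- Action of `(S z * S t)^k` on `e_t`: Chebyshev closed form. -/
lemma pow_apply_et (hMa : E.M t z = -a) (hMb : E.M z t = -b)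
    (hab : a * b = 4 * Real.cos θ ^ 2)
    (hsin : Real.sin θ ≠ 0) (hcos : Real.cos θ ≠ 0) (k : ℕ) :
    ((E.S z * E.S t) ^ k) (Pi.single t 1 : ι → ℝ)
      = (-(b * Real.sin (2*k*θ)) / (2 * Real.sin θ * Real.cos θ)) •
          (Pi.single z 1 : ι → ℝ)
        + (-(2 * Real.cos θ * Real.sin (2*k*θ - θ)) / (2 * Real.sin θ * Real.cos θ)) •
          (Pi.single t 1 : ι → ℝ) := by
  have hD : (2 * Real.sin θ * Real.cos θ) ≠ 0 := by
    intro h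
    rcases mul_eq_zero.mp h with h' | h'
    · rcases mul_eq_zero.mp h' with h'' | h''
      · norm_num at h''
      · exact hsin h''
    · exact hcos h'
  induction k with
  | zero =>
    push_cast
    rw [show 2*(0:ℝ)*θ - θ = -θ by ring, show 2*(0:ℝ)*θ = 0 by ring, Real.sin_zero,
      Real.sin_neg]
    rw [show -(b * 0) / (2 * Real.sin θ * Real.cos θ) = 0 by ring]
    rw [show -(2 * Real.cos θ * -Real.sin θ) / (2 * Real.sin θ * Real.cos θ)
        = 2 * Real.sin θ * Real.cos θ / (2 * Real.sin θ * Real.cos θ) by ring]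
    rw [div_self hD, pow_zero, Module.End.one_apply]
    module
  | succ k ih =>
    rw [pow_succ', Module.End.mul_apply, ih, Module.End.mul_apply,
      St_AB E z t hMa, Sz_AB E z t hMb]
    push_cast
    have S2 : Real.sin (2*(k:ℝ)*θ - θ + 2*θ)
        = 2 * Real.cos θ * Real.sin (2*(k:ℝ)*θ) - Real.sin (2*(k:ℝ)*θ - θ) := by
      have h := sin_shift (2*(k:ℝ)*θ - θ) θ
      rw [show 2*(k:ℝ)*θ - θ + θ = 2*(k:ℝ)*θ by ring] at h
      exact h
    have S0 := sin_shift (2*(k:ℝ)*θ) θ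
    have hB : a * (-(b * Real.sin (2*(k:ℝ)*θ)) / (2 * Real.sin θ * Real.cos θ))
          - -(2 * Real.cos θ * Real.sin (2*(k:ℝ)*θ - θ)) / (2 * Real.sin θ * Real.cos θ)
        = -(2 * Real.cos θ * Real.sin (2*((k:ℝ)+1)*θ - θ)) / (2 * Real.sin θ * Real.cos θ) := by
      rw [show a * (-(b * Real.sin (2*(k:ℝ)*θ)) / (2 * Real.sin θ * Real.cos θ))
          = -((a*b) * Real.sin (2*(k:ℝ)*θ)) / (2 * Real.sin θ * Real.cos θ) by ring, hab]
      rw [show 2*((k:ℝ)+1)*θ - θ = 2*(k:ℝ)*θ - θ + 2*θ by ring, S2]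
      ring
    rw [hB]
    have hA : b * (-(2 * Real.cos θ * Real.sin (2*((k:ℝ)+1)*θ - θ)) / (2 * Real.sin θ * Real.cos θ))
          - -(b * Real.sin (2*(k:ℝ)*θ)) / (2 * Real.sin θ * Real.cos θ)
        = -(b * Real.sin (2*((k:ℝ)+1)*θ)) / (2 * Real.sin θ * Real.cos θ) := by
      rw [show 2*((k:ℝ)+1)*θ - θ = 2*(k:ℝ)*θ + θ by ring]
      rw [show 2*((k:ℝ)+1)*θ = 2*(k:ℝ)*θ + 2*θ by ring, S0]
      ring
    rw [hA]

end Pow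

end EGCMAux

namespace EGCMAux

open EGCM Real CoxeterSystem List

variable {ι : Type*} [Fintype ι] [DecidableEq ι]

lemma pow_fix (E : EGCM ι) (z t : ι) {w : ι → ℝ}
    (hwz : ∑ k, E.M z k * w k = 0) (hwt : ∑ k, E.M t k * w k = 0) (n : ℕ) :
    ((E.S z * E.S t) ^ n) w = w := by
  induction n with
  | zero => rw [pow_zero, Module.End.one_apply]
  | succ n ih =>
    rw [pow_succ', Module.End.mul_apply, ih, Module.End.mul_apply, S_fix E hwt, S_fix E hwz]

lemma decomp (E : EGCM ι) (z t : ι) {a b : ℝ}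
    (hMa : E.M t z = -a) (hMb : E.M z t = -b) (hdet : a * b ≠ 4) (v : ι → ℝ) :
    ∃ A B : ℝ, ∃ w : ι → ℝ,
      v = A • (Pi.single z 1 : ι → ℝ) + B • (Pi.single t 1 : ι → ℝ) + w
      ∧ (∑ k, E.M z k * w k) = 0 ∧ (∑ k, E.M t k * w k) = 0 := by
  have hdet' : 4 - a * b ≠ 0 := fun h => hdet (by linarith [h])
  set φz := ∑ k, E.M z k * v k with hφz
  set φt := ∑ k, E.M t k * v k with hφt
  set A := (2*φz + b*φt)/(4 - a*b) with hA
  set B := (2*φt + a*φz)/(4 - a*b) with hB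
  refine ⟨A, B, v - A • (Pi.single z 1 : ι → ℝ) - B • (Pi.single t 1 : ι → ℝ), by module, ?_, ?_⟩
  · rw [phi_sub, phi_sub, phi_smul, phi_smul, phi_single, phi_single, E.diag z, hMb, ← hφz]
    rw [hA, hB]
    linear_combination (-φz) * mul_inv_cancel₀ hdet'
  · rw [phi_sub, phi_sub, phi_smul, phi_smul, phi_single, phi_single, E.diag t, hMa, ← hφt]
    rw [hA, hB]
    linear_combination (-φt) * mul_inv_cancel₀ hdet'

lemma braid_finite (E : EGCM ι) (z t : ι) {a b θ : ℝ}
    (hMa : E.M t z = -a) (hMb : E.M z t = -b)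
    (hab : a * b = 4 * Real.cos θ ^ 2)
    (hsin : Real.sin θ ≠ 0) (hcos : Real.cos θ ≠ 0) (hdet : a * b ≠ 4)
    (m : ℕ) (hmθ : (m:ℝ) * θ = Real.pi) :
    (E.S z * E.S t) ^ m = 1 := by
  have hD : (2 * Real.sin θ * Real.cos θ) ≠ 0 := by
    intro h
    rcases mul_eq_zero.mp h with h' | h'
    · rcases mul_eq_zero.mp h' with h'' | h''
      · norm_num at h''
      · exact hsin h''
    · exact hcos h'
  have h2m : 2*(m:ℝ)*θ = 2*Real.pi := by rw [← hmθ]; ring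
  have hez : ((E.S z * E.S t) ^ m) (Pi.single z 1 : ι → ℝ) = (Pi.single z 1 : ι → ℝ) := by
    rw [pow_apply_ez E z t hMa hMb hab hsin hcos m]
    rw [show 2*(m:ℝ)*θ + θ = θ + 2*Real.pi by rw [← h2m]; ring, Real.sin_add_two_pi,
      h2m, Real.sin_two_pi]
    rw [show a * 0 / (2 * Real.sin θ * Real.cos θ) = 0 by ring]
    rw [show 2 * Real.cos θ * Real.sin θ / (2 * Real.sin θ * Real.cos θ)
        = 2 * Real.sin θ * Real.cos θ / (2 * Real.sin θ * Real.cos θ) by ring]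
    rw [div_self hD]
    module
  have het : ((E.S z * E.S t) ^ m) (Pi.single t 1 : ι → ℝ) = (Pi.single t 1 : ι → ℝ) := by
    rw [pow_apply_et E z t hMa hMb hab hsin hcos m]
    rw [show 2*(m:ℝ)*θ - θ = 2*Real.pi - θ by linarith [h2m], Real.sin_two_pi_sub,
      h2m, Real.sin_two_pi]
    rw [show -(b * 0) / (2 * Real.sin θ * Real.cos θ) = 0 by ring]
    rw [show -(2 * Real.cos θ * -Real.sin θ) / (2 * Real.sin θ * Real.cos θ)
        = 2 * Real.sin θ * Real.cos θ / (2 * Real.sin θ * Real.cos θ) by ring]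
    rw [div_self hD]
    module
  apply LinearMap.ext
  intro v
  obtain ⟨A, B, w, hv, hwz, hwt⟩ := decomp E z t hMa hMb hdet v
  rw [Module.End.one_apply, hv, map_add, map_add, map_smul, map_smul, hez, het,
    pow_fix E z t hwz hwt]

lemma SiSj_comm (E : EGCM ι) {i j : ι} (h1 : E.M i j = 0) (h2 : E.M j i = 0) :
    E.S i * E.S j = E.S j * E.S i := by
  have key : ∀ (p q : ι), E.M p q = 0 → ∀ v : ι → ℝ, E.S p (E.S q v)
      = v - (∑ k, E.M q k * v k) • (Pi.single q 1 : ι → ℝ)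
          - (∑ k, E.M p k * v k) • (Pi.single p 1 : ι → ℝ) := by
    intro p q hpq v
    rw [S_apply E q, S_apply E p, phi_sub, phi_smul, phi_single, hpq, mul_zero, sub_zero]
  apply LinearMap.ext
  intro v
  rw [Module.End.mul_apply, Module.End.mul_apply, key i j h1 v, key j i h2 v]
  module

lemma braid_two (E : EGCM ι) {i j : ι} (h1 : E.M i j = 0) (h2 : E.M j i = 0) :
    (E.S i * E.S j) ^ 2 = 1 := by
  have hc : E.S j * E.S i = E.S i * E.S j := (SiSj_comm E h2 h1)
  calc (E.S i * E.S j) ^ 2 = E.S i * (E.S j * E.S i) * E.S j := by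
        rw [pow_two]
        noncomm_ring
    _ = E.S i * (E.S i * E.S j) * E.S j := by rw [hc]
    _ = (E.S i * E.S i) * (E.S j * E.S j) := by noncomm_ring
    _ = 1 := by rw [S_invol, S_invol, one_mul]

lemma isLiftable (E : EGCM ι) : CoxeterMatrix.IsLiftable E.cox E.S := by
  intro i j
  by_cases hij : i = j
  · subst hij
    have h1 : E.cox i i = 1 := E.cox.diagonal i
    rw [h1, pow_one, S_invol]
  · rcases cox_cases E hij with ⟨h2, hM0, hM0'⟩ | ⟨h0, _, _, _⟩ | ⟨h3, heq, hMne, hMne'⟩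
    · rw [h2]
      exact braid_two E hM0 hM0'
    · rw [h0, pow_zero]
    · set m := E.cox i j with hm
      have hm0 : m ≠ 0 := by omega
      have hmr : (0:ℝ) < (m:ℝ) := by
        have : 0 < m := by omega
        exact_mod_cast this
      set θ := Real.pi / (m:ℝ) with hθ
      have hθpos : 0 < θ := by
        rw [hθ]
        exact div_pos Real.pi_pos hmr
      have hθle : θ ≤ Real.pi / 3 := by
        rw [hθ]
        apply div_le_div_of_nonneg_left Real.pi_pos.le (by norm_num)
        exact_mod_cast h3
      have hθltpi : θ < Real.pi := by
        have := Real.pi_pos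
        linarith
      have hsin : Real.sin θ ≠ 0 := ne_of_gt (Real.sin_pos_of_pos_of_lt_pi hθpos hθltpi)
      have hcospos : 0 < Real.cos θ := by
        apply Real.cos_pos_of_mem_Ioo
        constructor
        · have := Real.pi_pos
          linarith
        · have := Real.pi_pos
          linarith
      have hcos : Real.cos θ ≠ 0 := ne_of_gt hcospos
      have hMa : E.M j i = -(-(E.M j i)) := (neg_neg _).symm
      have hMb : E.M i j = -(-(E.M i j)) := (neg_neg _).symm
      have hab : (-(E.M j i)) * (-(E.M i j)) = 4 * Real.cos θ ^ 2 := by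
        rw [hθ]
        rw [← heq]
        ring
      have hdet : (-(E.M j i)) * (-(E.M i j)) ≠ 4 := by
        rw [hab, hθ]
        have := cos_sq_lt_four (k := m) (by omega)
        exact ne_of_lt this
      have hmθ : (m:ℝ) * θ = Real.pi := by
        rw [hθ]
        field_simp
      exact braid_finite E i j hMa hMb hab hsin hcos hdet m hmθ

end EGCMAux

namespace EGCMAux

open EGCM Real CoxeterSystem List

variable {ι : Type*} [Fintype ι] [DecidableEq ι]

/-- The geometric representation of the Coxeter group of `E`. -/
noncomputable def sigma (E : EGCM ι) : E.cox.Group →* Module.End ℝ (ι → ℝ) :=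
  (E.cox.toCoxeterSystem).lift ⟨E.S, isLiftable E⟩

lemma sigma_simple (E : EGCM ι) (i : ι) :
    sigma E (E.cox.toCoxeterSystem.simple i) = E.S i :=
  CoxeterSystem.lift_apply_simple _ _ i

lemma S_single_self (E : EGCM ι) (z : ι) :
    E.S z (Pi.single z 1 : ι → ℝ) = -(Pi.single z 1 : ι → ℝ) := by
  rw [S_apply, phi_single, E.diag z]
  module

/-- Dihedral positivity: the chain vector `σ(π(alternatingWord z t K)) e_z` is a
nonnegative combination of `e_z` and `e_t` provided `K < m` (or `m = 0`, i.e. `m = ∞`). -/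
lemma cvec_nonneg (E : EGCM ι) {z t : ι} (hzt : z ≠ t) (K : ℕ)
    (hK : E.cox z t = 0 ∨ K + 1 ≤ E.cox z t) :
    ∃ A B : ℝ,
      sigma E (E.cox.toCoxeterSystem.wordProd (alternatingWord z t K)) (Pi.single z 1 : ι → ℝ)
        = A • (Pi.single z 1 : ι → ℝ) + B • (Pi.single t 1 : ι → ℝ)
      ∧ 0 ≤ A ∧ 0 ≤ B := by
  set cs := E.cox.toCoxeterSystem with hcs
  have ha0 : 0 ≤ -(E.M t z) := by
    have := E.offDiag_nonpos t z (Ne.symm hzt)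
    linarith
  have hb0 : 0 ≤ -(E.M z t) := by
    have := E.offDiag_nonpos z t hzt
    linarith
  have hMa : E.M t z = -(-(E.M t z)) := (neg_neg _).symm
  have hMb : E.M z t = -(-(E.M z t)) := (neg_neg _).symm
  have hπ : cs.wordProd (alternatingWord z t K)
      = (if Even K then 1 else cs.simple t) * (cs.simple z * cs.simple t) ^ (K / 2) :=
    cs.prod_alternatingWord_eq_mul_pow z t K
  have hσpow : ∀ i : ℕ, sigma E ((cs.simple z * cs.simple t) ^ i) = (E.S z * E.S t) ^ i := by
    intro i
    rw [map_pow, map_mul, sigma_simple, sigma_simple]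
  -- trivial case K = 0
  rcases Nat.eq_zero_or_pos K with rfl | hKpos
  · refine ⟨1, 0, ?_, by norm_num, by norm_num⟩
    rw [hπ, if_pos Even.zero]
    rw [Nat.zero_div, pow_zero, mul_one, map_one, Module.End.one_apply]
    module
  rcases cox_cases E hzt with ⟨h2, hM0, hM0'⟩ | ⟨h0, h4, hMne, hMne'⟩ | ⟨h3, heq, hMne, hMne'⟩
  · -- m = 2, so K = 1
    have hK1 : K = 1 := by
      rcases hK with h | h
      · omega
      · omega
    subst hK1
    refine ⟨1, -(E.M t z), ?_, by norm_num, ha0⟩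
    have h1 : alternatingWord z t 1 = [t] := rfl
    rw [h1, wordProd_singleton, sigma_simple, S_apply, phi_single]
    module
  · -- m = 0 (infinite case)
    set a := -(E.M t z) with hadef
    set b := -(E.M z t) with hbdef
    have hab4 : 4 ≤ a * b := by
      have : a * b = E.M z t * E.M t z := by rw [hadef, hbdef]; ring
      linarith [this ▸ h4]
    have claim : ∀ i : ℕ, ∃ A B : ℝ,
        ((E.S z * E.S t) ^ i) (Pi.single z 1 : ι → ℝ)
          = A • (Pi.single z 1 : ι → ℝ) + B • (Pi.single t 1 : ι → ℝ)
        ∧ 0 ≤ A ∧ 0 ≤ B ∧ 2 * B ≤ a * A := by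
      intro i
      induction i with
      | zero =>
        refine ⟨1, 0, ?_, by norm_num, le_refl 0, by linarith⟩
        rw [pow_zero, Module.End.one_apply]
        module
      | succ i ih =>
        obtain ⟨A, B, hform, hA, hB, hinv⟩ := ih
        have h1 : 0 ≤ a * A - 2 * B := by linarith
        have h1' : 0 ≤ a * A - B := by linarith
        refine ⟨b * (a * A - B) - A, a * A - B, ?_, ?_, h1', ?_⟩
        · rw [pow_succ', Module.End.mul_apply, hform, Module.End.mul_apply,
            St_AB E z t hMa, Sz_AB E z t hMb]
        · have h2 : 0 ≤ b * (a * A - 2 * B) := mul_nonneg hb0 h1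
          have h3 : 4 * A ≤ a * b * A := by nlinarith
          nlinarith
        · have h4' : 0 ≤ (a * b - 4) * (a * A - B) := mul_nonneg (by linarith) h1'
          nlinarith
    rcases Nat.even_or_odd K with hKe | hKo
    · obtain ⟨A, B, hform, hA, hB, _⟩ := claim (K / 2)
      refine ⟨A, B, ?_, hA, hB⟩
      rw [hπ, if_pos hKe, one_mul, hσpow, hform]
    · obtain ⟨A, B, hform, hA, hB, hinv⟩ := claim (K / 2)
      refine ⟨A, a * A - B, ?_, hA, by linarith⟩
      rw [hπ, if_neg (Nat.not_even_iff_odd.mpr hKo), map_mul, sigma_simple,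
        Module.End.mul_apply, hσpow, hform, St_AB E z t hMa]
  · -- m ≥ 3 : trigonometric case
    set m := E.cox z t with hm
    have hKm : K + 1 ≤ m := by
      rcases hK with h | h
      · omega
      · exact h
    have hm0 : m ≠ 0 := by omega
    have hmr : (0:ℝ) < (m:ℝ) := by
      have : 0 < m := by omega
      exact_mod_cast this
    set θ := Real.pi / (m:ℝ) with hθ
    have hθpos : 0 < θ := div_pos Real.pi_pos hmr
    have hθle : θ ≤ Real.pi / 3 := by
      rw [hθ]
      apply div_le_div_of_nonneg_left Real.pi_pos.le (by norm_num)
      exact_mod_cast h3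
    have hθltpi : θ < Real.pi := by
      have := Real.pi_pos
      linarith
    have hsin : Real.sin θ ≠ 0 := ne_of_gt (Real.sin_pos_of_pos_of_lt_pi hθpos hθltpi)
    have hsinpos : 0 < Real.sin θ := Real.sin_pos_of_pos_of_lt_pi hθpos hθltpi
    have hcospos : 0 < Real.cos θ := by
      apply Real.cos_pos_of_mem_Ioo
      constructor
      · have := Real.pi_pos
        linarith
      · have := Real.pi_pos
        linarith
    have hcos : Real.cos θ ≠ 0 := ne_of_gt hcospos
    have hDpos : 0 < 2 * Real.sin θ * Real.cos θ := by positivity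
    have hab : (-(E.M t z)) * (-(E.M z t)) = 4 * Real.cos θ ^ 2 := by
      rw [show (-(E.M t z)) * (-(E.M z t)) = E.M z t * E.M t z by ring]
      exact heq
    have hmθ : (m:ℝ) * θ = Real.pi := by
      rw [hθ]
      field_simp
    have hsr : ∀ r : ℕ, r ≤ m → 0 ≤ Real.sin ((r:ℝ) * θ) := by
      intro r hr
      apply Real.sin_nonneg_of_nonneg_of_le_pi
      · positivity
      · rw [← hmθ]
        apply mul_le_mul_of_nonneg_right _ hθpos.le
        exact_mod_cast hr
    rcases Nat.even_or_odd K with hKe | hKo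
    · obtain ⟨i, hi⟩ := hKe
      have hdiv : K / 2 = i := by omega
      refine ⟨2 * Real.cos θ * Real.sin (2*(i:ℝ)*θ + θ) / (2 * Real.sin θ * Real.cos θ),
        (-(E.M t z)) * Real.sin (2*(i:ℝ)*θ) / (2 * Real.sin θ * Real.cos θ), ?_, ?_, ?_⟩
      · rw [hπ, if_pos ⟨i, hi⟩, one_mul, hσpow, hdiv,
          pow_apply_ez E z t hMa hMb hab hsin hcos i]
      · apply div_nonneg _ hDpos.le
        apply mul_nonneg (by positivity)
        have := hsr (2*i+1) (by omega)
        rw [show ((2*i+1 : ℕ):ℝ) * θ = 2*(i:ℝ)*θ + θ by push_cast; ring] at this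
        exact this
      · apply div_nonneg _ hDpos.le
        apply mul_nonneg ha0
        have := hsr (2*i) (by omega)
        rw [show ((2*i : ℕ):ℝ) * θ = 2*(i:ℝ)*θ by push_cast; ring] at this
        exact this
    · obtain ⟨i, hi⟩ := hKo
      have hdiv : K / 2 = i := by omega
      have hstep : (-(E.M t z)) * (2 * Real.cos θ * Real.sin (2*(i:ℝ)*θ + θ)
            / (2 * Real.sin θ * Real.cos θ))
          - (-(E.M t z)) * Real.sin (2*(i:ℝ)*θ) / (2 * Real.sin θ * Real.cos θ)
        = (-(E.M t z)) * Real.sin (2*(i:ℝ)*θ + 2*θ) / (2 * Real.sin θ * Real.cos θ) := by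
        rw [sin_shift]
        ring
      refine ⟨2 * Real.cos θ * Real.sin (2*(i:ℝ)*θ + θ) / (2 * Real.sin θ * Real.cos θ),
        (-(E.M t z)) * Real.sin (2*(i:ℝ)*θ + 2*θ) / (2 * Real.sin θ * Real.cos θ), ?_, ?_, ?_⟩
      · rw [hπ, if_neg (Nat.not_even_iff_odd.mpr ⟨i, hi⟩), map_mul, sigma_simple,
          Module.End.mul_apply, hσpow, hdiv, pow_apply_ez E z t hMa hMb hab hsin hcos i,
          St_AB E z t hMa, hstep]
      · apply div_nonneg _ hDpos.le
        apply mul_nonneg (by positivity)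
        have := hsr (2*i+1) (by omega)
        rw [show ((2*i+1 : ℕ):ℝ) * θ = 2*(i:ℝ)*θ + θ by push_cast; ring] at this
        exact this
      · apply div_nonneg _ hDpos.le
        apply mul_nonneg ha0
        have := hsr (2*i+2) (by omega)
        rw [show ((2*i+2 : ℕ):ℝ) * θ = 2*(i:ℝ)*θ + 2*θ by push_cast; ring] at this
        exact this

end EGCMAux

namespace EGCMAux

open EGCM Real CoxeterSystem List

variable {ι : Type*} [Fintype ι] [DecidableEq ι]

lemma single_nonneg (z l : ι) : 0 ≤ (Pi.single z 1 : ι → ℝ) l := by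
  rw [Pi.single_apply]
  split_ifs <;> norm_num

/-- Root positivity: if `ℓ(w sᵤ) > ℓ(w)` then `σ(w) eᵤ` is entrywise nonnegative. -/
theorem sigma_nonneg_of_ascent (E : EGCM ι) :
    ∀ n : ℕ, ∀ w : E.cox.Group, ∀ z : ι,
      E.cox.toCoxeterSystem.length w = n →
      E.cox.toCoxeterSystem.length w
        < E.cox.toCoxeterSystem.length (w * E.cox.toCoxeterSystem.simple z) →
      ∀ l, 0 ≤ sigma E w (Pi.single z 1 : ι → ℝ) l := by
  set cs := E.cox.toCoxeterSystem with hcs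
  intro n
  induction n using Nat.strong_induction_on with
  | _ n IH =>
    intro w z hn hasc
    by_cases hw1 : w = 1
    · subst hw1
      intro l
      rw [map_one, Module.End.one_apply]
      exact single_nonneg z l
    · obtain ⟨t, ht⟩ := cs.exists_rightDescent_of_ne_one hw1
      unfold CoxeterSystem.IsRightDescent at ht
      have hzt : z ≠ t := by
        rintro rfl
        omega
      set lett : ℕ → ι := fun k => if Even k then t else z with hlett
      set v : ℕ → E.cox.Group := fun k => w * (cs.wordProd (alternatingWord z t k))⁻¹ with hv
      have hv0 : v 0 = w := by
        simp only [hv]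
        rw [show alternatingWord z t 0 = [] from rfl, cs.wordProd_nil, inv_one, mul_one]
      have hweq : ∀ k, w = v k * cs.wordProd (alternatingWord z t k) := by
        intro k
        simp only [hv]
        rw [inv_mul_cancel_right]
      have hvs : ∀ k, v (k+1) = v k * cs.simple (lett k) := by
        intro k
        simp only [hv, hlett]
        rw [CoxeterSystem.alternatingWord_succ' z t k, cs.wordProd_cons, mul_inv_rev,
          cs.inv_simple, ← mul_assoc]
      have hstep : ∀ k, cs.length (v k) + k = n →
          ¬ (cs.length (v k) < cs.length (v k * cs.simple (lett k))) →
          cs.length (v (k+1)) + (k+1) = n := by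
        intro k hk hnotasc
        have hne : cs.length (v (k+1)) ≠ cs.length (v k) := by
          rw [hvs k]
          exact cs.length_mul_simple_ne (v k) (lett k)
        have hle : cs.length (v (k+1)) ≤ cs.length (v k) := by
          rw [hvs k]
          exact not_lt.mp hnotasc
        have hlow : cs.length (v k) ≤ cs.length (v (k+1)) + 1 := by
          have hvk : v k = v (k+1) * cs.simple (lett k) := by
            rw [hvs k, CoxeterSystem.simple_mul_simple_cancel_right]
          calc cs.length (v k) = cs.length (v (k+1) * cs.simple (lett k)) := by rw [← hvk]
            _ ≤ cs.length (v (k+1)) + cs.length (cs.simple (lett k)) := cs.length_mul_le _ _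
            _ = cs.length (v (k+1)) + 1 := by rw [cs.length_simple]
        omega
      have hex : ∃ k, cs.length (v k) + k = n ∧
          cs.length (v k) < cs.length (v k * cs.simple (lett k)) := by
        by_contra hno
        push_neg at hno
        have hall : ∀ k, cs.length (v k) + k = n := by
          intro k
          induction k with
          | zero => rw [hv0]; omega
          | succ k ihk =>
            exact hstep k ihk (fun hlt => absurd hlt (not_lt.mpr (hno k ihk)))
        have := hall (n+1)
        omega
      set K := Nat.find hex with hKdef
      obtain ⟨hKlen, hKasc⟩ := Nat.find_spec hex
      rw [← hKdef] at hKlen hKasc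
      have hKpos : K ≠ 0 := by
        intro h0
        rw [h0, hv0] at hKasc
        have hl0 : lett 0 = t := by simp [hlett]
        rw [hl0] at hKasc
        omega
      have hchain : ∀ k, k ≤ K → cs.length (v k) + k = n := by
        intro k hk
        induction k with
        | zero => rw [hv0]; omega
        | succ k ihk =>
          have hkK : k < K := by omega
          have hnot := Nat.find_min hex hkK
          have hklen : cs.length (v k) + k = n := ihk (by omega)
          refine hstep k hklen (fun hlt => hnot ⟨hklen, hlt⟩)
      obtain ⟨K', hK'⟩ : ∃ K', K = K' + 1 := ⟨K - 1, by omega⟩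
      have hprev : v K * cs.simple (lett K') = v K' := by
        rw [hK', hvs K', CoxeterSystem.simple_mul_simple_cancel_right]
      have hlenK : cs.length (v K) + K = n := hchain K (le_refl K)
      have hlenK' : cs.length (v K') + K' = n := hchain K' (by omega)
      have hascK' : cs.length (v K) < cs.length (v K * cs.simple (lett K')) := by
        rw [hprev]
        omega
      have hascz : cs.length (v K) < cs.length (v K * cs.simple z) := by
        by_cases hE : Even K
        · have hE' : ¬ Even K' := by
            rw [hK'] at hE
            exact Nat.even_add_one.mp hE
          have hl : lett K' = z := by simp [hlett, hE']
          rw [← hl]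
          exact hascK'
        · have hl : lett K = z := by simp [hlett, hE]
          rw [← hl]
          exact hKasc
      have hasct : cs.length (v K) < cs.length (v K * cs.simple t) := by
        by_cases hE : Even K
        · have hl : lett K = t := by simp [hlett, hE]
          rw [← hl]
          exact hKasc
        · have hE' : Even K' := by
            rw [hK'] at hE
            simpa using (Nat.even_add_one.not.mp (by simpa using hE))
          have hl : lett K' = t := by simp [hlett, hE']
          rw [← hl]
          exact hascK'
      have hcap : E.cox z t = 0 ∨ K + 1 ≤ E.cox z t := by
        by_contra hnc
        push_neg at hnc
        obtain ⟨hne0, hlt⟩ := hnc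
        have hmmK : E.cox z t ≤ K := by omega
        have hlenm : cs.length (v (E.cox z t)) + (E.cox z t) = n := hchain _ hmmK
        obtain ⟨mm', hmm'⟩ : ∃ mm', E.cox z t = mm' + 1 := ⟨E.cox z t - 1, by omega⟩
        have hbraid : cs.wordProd (alternatingWord z t (E.cox z t))
            = cs.wordProd (alternatingWord t z (E.cox z t)) := by
          have h := cs.wordProd_braidWord_eq z t
          unfold CoxeterSystem.braidWord at h
          rwa [E.cox.symmetric t z] at h
        have h1 : alternatingWord t z (E.cox z t) = (alternatingWord z t mm').concat z := by
          rw [hmm']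
          rfl
        have hwz : w * cs.simple z = v (E.cox z t) * cs.wordProd (alternatingWord z t mm') := by
          calc w * cs.simple z
              = v (E.cox z t) * cs.wordProd (alternatingWord z t (E.cox z t)) * cs.simple z := by
                rw [← hweq]
            _ = v (E.cox z t) * (cs.wordProd (alternatingWord z t mm') * cs.simple z)
                  * cs.simple z := by
                rw [hbraid, h1, cs.wordProd_concat]
            _ = v (E.cox z t) * cs.wordProd (alternatingWord z t mm') := by
                rw [← mul_assoc, CoxeterSystem.simple_mul_simple_cancel_right]
        have hlen2 : cs.length (w * cs.simple z) ≤ cs.length (v (E.cox z t)) + mm' := by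
          rw [hwz]
          calc cs.length (v (E.cox z t) * cs.wordProd (alternatingWord z t mm'))
              ≤ cs.length (v (E.cox z t)) + cs.length (cs.wordProd (alternatingWord z t mm')) :=
                cs.length_mul_le _ _
            _ ≤ cs.length (v (E.cox z t)) + mm' := by
                have := cs.length_wordProd_le (alternatingWord z t mm')
                rw [CoxeterSystem.length_alternatingWord] at this
                omega
        omega
      obtain ⟨A, B, hform, hA, hB⟩ := cvec_nonneg E hzt K hcap
      rw [← hcs] at hform
      have hw : sigma E w (Pi.single z 1 : ι → ℝ)
          = A • (sigma E (v K) (Pi.single z 1 : ι → ℝ))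
            + B • (sigma E (v K) (Pi.single t 1 : ι → ℝ)) := by
        rw [hweq K, map_mul, Module.End.mul_apply, hform, map_add, map_smul, map_smul]
      intro l
      rw [hw]
      have hIHz : 0 ≤ sigma E (v K) (Pi.single z 1 : ι → ℝ) l :=
        IH (cs.length (v K)) (by omega) (v K) z rfl hascz l
      have hIHt : 0 ≤ sigma E (v K) (Pi.single t 1 : ι → ℝ) l :=
        IH (cs.length (v K)) (by omega) (v K) t rfl hasct l
      simp only [Pi.add_apply, Pi.smul_apply, smul_eq_mul]
      exact add_nonneg (mul_nonneg hA hIHz) (mul_nonneg hB hIHt)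

end EGCMAux

namespace EGCMAux

open EGCM Real CoxeterSystem List

variable {ι : Type*} [Fintype ι] [DecidableEq ι]

/-- Sign coherence of roots. -/
lemma sigma_coherent (E : EGCM ι) (w : E.cox.Group) (z : ι) :
    (∀ l, 0 ≤ sigma E w (Pi.single z 1 : ι → ℝ) l) ∨
    (∀ l, sigma E w (Pi.single z 1 : ι → ℝ) l ≤ 0) := by
  set cs := E.cox.toCoxeterSystem with hcs
  rcases lt_or_gt_of_ne (cs.length_mul_simple_ne w z) with hlt | hgt
  · right
    set w' := w * cs.simple z with hw'
    have hw : w = w' * cs.simple z := by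
      rw [hw', CoxeterSystem.simple_mul_simple_cancel_right]
    have hasc : cs.length w' < cs.length (w' * cs.simple z) := by
      rw [← hw]
      exact hlt
    have hpos := sigma_nonneg_of_ascent E (cs.length w') w' z rfl hasc
    intro l
    have hneg : sigma E w (Pi.single z 1 : ι → ℝ) = - sigma E w' (Pi.single z 1 : ι → ℝ) := by
      rw [hw, map_mul, Module.End.mul_apply, sigma_simple, S_single_self, map_neg]
    rw [hneg]
    simp only [Pi.neg_apply]
    linarith [hpos l]
  · left
    exact sigma_nonneg_of_ascent E (cs.length w) w z rfl hgt

lemma pair_fireList (E : EGCM ι) (p : ι → ℝ) (u : List ι) (v : ι → ℝ) :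
    pair (E.fireList p u) v
      = pair p (sigma E (E.cox.toCoxeterSystem.wordProd u) v) := by
  induction u generalizing p with
  | nil =>
    rw [show E.fireList p [] = p from rfl, CoxeterSystem.wordProd_nil, map_one,
      Module.End.one_apply]
  | cons i s ih =>
    calc pair (E.fireList p (i :: s)) v
        = pair (E.fireList (E.fire p i) s) v := rfl
      _ = pair (E.fire p i) (sigma E (E.cox.toCoxeterSystem.wordProd s) v) := ih _
      _ = pair p (E.S i (sigma E (E.cox.toCoxeterSystem.wordProd s) v)) := pair_fire _ _ _ _
      _ = pair p (sigma E (E.cox.toCoxeterSystem.wordProd (i :: s)) v) := by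
          rw [CoxeterSystem.wordProd_cons, map_mul, sigma_simple, Module.End.mul_apply]

lemma Legal_append_iff (E : EGCM ι) (p : ι → ℝ) (u : List ι) (x : ι) :
    E.Legal p (u ++ [x]) ↔ E.Legal p u ∧ 0 < E.fireList p u x := by
  induction u generalizing p with
  | nil =>
    show (0 < p x ∧ True) ↔ True ∧ 0 < p x
    tauto
  | cons i s ih =>
    show (0 < p i ∧ E.Legal (E.fire p i) (s ++ [x])) ↔
      (0 < p i ∧ E.Legal (E.fire p i) s) ∧ 0 < E.fireList (E.fire p i) s x
    rw [ih]
    tauto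

lemma exists_long_legal (E : EGCM ι) (j : ι)
    (hno : ∀ s : List ι, ¬ E.IsGameSeq (Pi.single j 1) s) :
    ∀ L : ℕ, ∃ u : List ι, E.Legal (Pi.single j 1) u ∧ u.length = L := by
  intro L
  induction L with
  | zero => exact ⟨[], trivial, rfl⟩
  | succ L ih =>
    obtain ⟨u, hu, hlen⟩ := ih
    have hnt : ¬ EGCM.Terminal (E.fireList (Pi.single j 1) u) := fun ht => hno u ⟨hu, ht⟩
    unfold EGCM.Terminal at hnt
    push_neg at hnt
    obtain ⟨x, hx⟩ := hnt
    exact ⟨u ++ [x], (Legal_append_iff E _ u x).mpr ⟨hu, hx⟩, by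
      rw [List.length_append, hlen]
      rfl⟩

lemma legal_val (E : EGCM ι) (p : ι → ℝ) (u : List ι) (hu : E.Legal p u) :
    ∀ k, (hk : k < u.length) →
      0 < pair p (sigma E (E.cox.toCoxeterSystem.wordProd (u.take k))
        (Pi.single (u.get ⟨k, hk⟩) 1 : ι → ℝ)) := by
  induction u generalizing p with
  | nil =>
    intro k hk
    simp at hk
  | cons i s ih =>
    obtain ⟨hpi, hs⟩ := hu
    intro k hk
    cases k with
    | zero =>
      show 0 < pair p (sigma E (E.cox.toCoxeterSystem.wordProd []) (Pi.single i 1 : ι → ℝ))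
      rw [CoxeterSystem.wordProd_nil, map_one, Module.End.one_apply, pair_single_right]
      exact hpi
    | succ k =>
      have hk' : k < s.length := by simpa using hk
      have hval := ih (E.fire p i) hs k hk'
      show 0 < pair p (sigma E (E.cox.toCoxeterSystem.wordProd (i :: s.take k))
        (Pi.single (s.get ⟨k, hk'⟩) 1 : ι → ℝ))
      rw [CoxeterSystem.wordProd_cons, map_mul, sigma_simple, Module.End.mul_apply,
        ← pair_fire]
      exact hval

end EGCMAux

namespace EGCMAux

open EGCM Real CoxeterSystem List in
theorem main {ι : Type*} [Fintype ι] [DecidableEq ι] (E : EGCM ι)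
    (lam : ι → ℝ) (hdom : EGCM.Dominant lam) (j : ι) (hj : 0 < lam j)
    (hconv : ∃ s : List ι, E.IsGameSeq lam s) :
    ∃ s : List ι, E.IsGameSeq (Pi.single j 1) s := by
  classical
  by_contra hno
  push_neg at hno
  obtain ⟨s, hsl, hst⟩ := hconv
  set cs := E.cox.toCoxeterSystem with hcs
  set w := cs.wordProd s with hw
  set N := cs.length w⁻¹ with hN
  obtain ⟨u, hu, hulen⟩ := exists_long_legal E j hno (N+1)
  have hdec : ∀ k, (hk : k < u.length) →
      cs.length (w⁻¹ * cs.wordProd (u.take (k+1)))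
        < cs.length (w⁻¹ * cs.wordProd (u.take k)) := by
    intro k hk
    set z := u.get ⟨k, hk⟩ with hz
    set β := sigma E (cs.wordProd (u.take k)) (Pi.single z 1 : ι → ℝ) with hβ
    have hβj : 0 < β j := by
      have := legal_val E (Pi.single j 1) u hu k hk
      rwa [pair_single_left] at this
    have hβpos : ∀ l, 0 ≤ β l := by
      rcases sigma_coherent E (cs.wordProd (u.take k)) z with h | h
      · exact h
      · exfalso
        have := h j
        rw [← hβ] at this
        linarith
    have hlb : 0 < pair lam β := by
      show 0 < ∑ l, lam l * β l
      exact Finset.sum_pos' (fun l _ => mul_nonneg (hdom l) (hβpos l))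
        ⟨j, Finset.mem_univ j, mul_pos hj hβj⟩
    set γ := sigma E (w⁻¹ * cs.wordProd (u.take k)) (Pi.single z 1 : ι → ℝ) with hγ
    have hτγ : pair (E.fireList lam s) γ = pair lam β := by
      rw [pair_fireList]
      congr 1
      rw [hγ, hβ, ← Module.End.mul_apply, ← map_mul, mul_inv_cancel_left]
    have hγnotpos : ¬ (∀ l, 0 ≤ γ l) := by
      intro hp
      have hle : pair (E.fireList lam s) γ ≤ 0 := by
        show (∑ l, E.fireList lam s l * γ l) ≤ 0
        exact Finset.sum_nonpos (fun l _ => mul_nonpos_of_nonpos_of_nonneg (hst l) (hp l))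
      rw [hτγ] at hle
      linarith
    have hnotasc : ¬ (cs.length (w⁻¹ * cs.wordProd (u.take k))
        < cs.length ((w⁻¹ * cs.wordProd (u.take k)) * cs.simple z)) := by
      intro hasc
      exact hγnotpos (sigma_nonneg_of_ascent E _ _ z rfl hasc)
    have hne := cs.length_mul_simple_ne (w⁻¹ * cs.wordProd (u.take k)) z
    have htake : cs.wordProd (u.take (k+1)) = cs.wordProd (u.take k) * cs.simple z := by
      have h1 : u.take (k+1) = u.take k ++ [z] := by
        rw [List.take_succ]
        congr
        rw [List.getElem?_eq_getElem hk]
        rfl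
      rw [h1, cs.wordProd_append, cs.wordProd_singleton]
    rw [htake, ← mul_assoc]
    omega
  have hiter : ∀ k, k ≤ u.length →
      cs.length (w⁻¹ * cs.wordProd (u.take k)) + k ≤ N := by
    intro k
    induction k with
    | zero =>
      intro _
      rw [show u.take 0 = [] from rfl, cs.wordProd_nil, mul_one]
      omega
    | succ k ihk =>
      intro hk1
      have h1 := ihk (by omega)
      have h2 := hdec k (by omega)
      omega
  have hfinal := hiter u.length (le_refl _)
  rw [hulen] at hfinal
  omega

end EGCMAux

/-- **Lemma 2.4.** If a dominant position `lam` with `lam j > 0` has a convergent game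
sequence, then the fundamental position `ω_j` has a convergent game sequence. -/
theorem egcm_fundamental_converges {ι : Type*} [Fintype ι] [DecidableEq ι] (E : EGCM ι)
    (lam : ι → ℝ) (hdom : EGCM.Dominant lam) (j : ι) (hj : 0 < lam j)
    (hconv : ∃ s : List ι, E.IsGameSeq lam s) :
    ∃ s : List ι, E.IsGameSeq (Pi.single j 1) s :=
  EGCMAux.main E lam hdom j hj hconv
end

section
/- Suppose the E-GCM graph (Γ,M) is connected and λ is a nonzero dominant position. Then in any convergent game sequence from λ, every node of Γ is fired at least once. -/
private lemma egcm_fire_aux {ι : Type*} [Fintype ι] (E : EGCM ι) (i : ι) :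
    ∀ (s : List ι) (lam : ι → ℝ), E.Legal lam s → i ∉ s →
      lam i ≤ E.fireList lam s i ∧
        ∀ j ∈ s, E.M j i ≠ 0 → lam i < E.fireList lam s i := by
  intro s
  induction s with
  | nil => intro lam _ _; exact ⟨le_refl _, by simp⟩
  | cons a t ih =>
    intro lam hl hmem
    have hai : a ≠ i := fun h => hmem (h ▸ (List.mem_cons_self : a ∈ a :: t))
    obtain ⟨hpos, hlt⟩ := hl
    have hit : i ∉ t := fun h => hmem (List.mem_cons_of_mem _ h)
    have hstep : lam i ≤ E.fire lam a i := by
      have := E.offDiag_nonpos a i hai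
      unfold EGCM.fire
      nlinarith
    obtain ⟨h1, h2⟩ := ih (E.fire lam a) hlt hit
    refine ⟨le_trans hstep h1, ?_⟩
    intro j hj hMj
    rcases List.mem_cons.mp hj with rfl | hj'
    · have hs2 : lam i < E.fire lam j i := by
        have hle := E.offDiag_nonpos j i hai
        have hlt2 : E.M j i < 0 := lt_of_le_of_ne hle hMj
        unfold EGCM.fire
        nlinarith
      exact lt_of_lt_of_le hs2 h1
    · exact lt_of_le_of_lt hstep (h2 j hj' hMj)

/-- **Lemma 2.6.** On a connected E-GCM graph, in any convergent game sequence for a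
nonzero dominant position, every node is fired at least once. -/
theorem egcm_connected_every_node_fired {ι : Type*} [Fintype ι] (E : EGCM ι)
    (hconn : E.graph.Connected) (lam : ι → ℝ) (hdom : EGCM.Dominant lam) (hne : lam ≠ 0)
    (s : List ι) (hs : E.IsGameSeq lam s) :
    ∀ i : ι, i ∈ s := by
  obtain ⟨hleg, hterm⟩ := hs
  intro i
  by_contra hi
  have step : ∀ a b, E.graph.Adj a b → a ∉ s → b ∉ s := by
    intro a b hab ha hb
    have hM : E.M b a ≠ 0 := fun h => hab.2 ((E.zero_iff a b).mpr h)
    have := (egcm_fire_aux E a s lam hleg ha).2 b hb hM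
    exact absurd (lt_of_le_of_lt (hdom a) (lt_of_lt_of_le this (hterm a))) (lt_irrefl 0)
  have key : ∀ (a b : ι) (w : E.graph.Walk a b), a ∉ s → b ∉ s := by
    intro a b w
    induction w with
    | nil => exact id
    | cons h _ ih => intro ha; exact ih (step _ _ h ha)
  have hnil : s = [] := by
    apply List.eq_nil_iff_forall_not_mem.mpr
    intro j hj
    exact key i j (hconn i j).some hi hj
  subst hnil
  exact hne (funext fun k => le_antisymm (hterm k) (hdom k))
end
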